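/- arXiv:2211.01905 — 5 statements merged into one kernel-verified Lean document; each statement's English description precedes it below -/
import Mathlib

section
/- For every digraph H, the fractional independence number and the fractional edge cover number of the contour of H equal those of the contour of the condensation H/∼, that is, α*(Γ(H)) = α*(Γ(H/∼)) and ρ*(Γ(H)) = ρ*(Γ(H/∼)). -/
noncomputable section

/-! ### Hypergraphs -/

/-- A hypergraph: a vertex set together with a set of nonempty hyperedges. -/
structure HGraph (V : Type) where
  verts : Set V
  edges : Set (Set V)
  edge_nonempty : ∀ e ∈ edges, e.Nonempty
  edge_subset : ∀ e ∈ edges, e ⊆ verts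

namespace HGraph

variable {V : Type}

/-- An independent set: no two of its vertices lie in a common hyperedge. -/
def IsIndepSet (H : HGraph V) (I : Set V) : Prop :=
  I ⊆ H.verts ∧ ∀ u ∈ I, ∀ v ∈ I, u ≠ v → ∀ e ∈ H.edges, ¬(u ∈ e ∧ v ∈ e)

/-- The independence number `α`. -/
def indepNum (H : HGraph V) : ℕ :=
  sSup {n | ∃ I : Set V, H.IsIndepSet I ∧ I.ncard = n}

/-- A fractional independent set: `μ : V(H) → [0,1]` with `∑_{v ∈ e} μ v ≤ 1` for each edge. -/
def IsFracIndep (H : HGraph V) (μ : V → ℝ) : Prop :=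
  (∀ v, 0 ≤ μ v ∧ μ v ≤ 1) ∧ (∀ v, v ∉ H.verts → μ v = 0) ∧
    ∀ e ∈ H.edges, (∑ᶠ v ∈ e, μ v) ≤ 1

/-- The weight of a (fractional independent) vertex-weighting. -/
def weight (H : HGraph V) (μ : V → ℝ) : ℝ := ∑ᶠ v ∈ H.verts, μ v

/-- The fractional independence number `α*`. -/
def fracIndepNum (H : HGraph V) : ℝ :=
  sSup {w | ∃ μ : V → ℝ, H.IsFracIndep μ ∧ H.weight μ = w}

/-- A fractional edge cover of a set `X` of vertices. -/
def IsFracEdgeCover (H : HGraph V) (X : Set V) (γ : Set V → ℝ) : Prop :=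
  (∀ e, 0 ≤ γ e) ∧ (∀ e, e ∉ H.edges → γ e = 0) ∧
    ∀ v ∈ X, 1 ≤ ∑ᶠ e ∈ {e ∈ H.edges | v ∈ e}, γ e

/-- The weight of an edge-weighting. -/
def coverWeight (H : HGraph V) (γ : Set V → ℝ) : ℝ := ∑ᶠ e ∈ H.edges, γ e

/-- `ρ*_H(X)`: the fractional edge cover number of a set `X` of vertices. -/
def fracCoverOf (H : HGraph V) (X : Set V) : ℝ :=
  sInf {w | ∃ γ : Set V → ℝ, H.IsFracEdgeCover X γ ∧ H.coverWeight γ = w}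

/-- The fractional edge cover number `ρ*(H)`. -/
def fracEdgeCoverNum (H : HGraph V) : ℝ := H.fracCoverOf H.verts

/-- A tree decomposition of a hypergraph. -/
structure TreeDecomp (H : HGraph V) where
  n : ℕ
  tree : SimpleGraph (Fin n)
  isTree : tree.IsTree
  bag : Fin n → Set V
  bag_subset : ∀ t, bag t ⊆ H.verts
  verts_covered : ∀ v ∈ H.verts, ∃ t, v ∈ bag t
  edges_covered : ∀ e ∈ H.edges, ∃ t, e ⊆ bag t
  bags_connected : ∀ (v : V) (t₁ t₂ : Fin n) (h₁ : v ∈ bag t₁) (h₂ : v ∈ bag t₂),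
    (tree.induce {t | v ∈ bag t}).Reachable ⟨t₁, h₁⟩ ⟨t₂, h₂⟩

/-- The `μ`-width of a tree decomposition: the maximum `μ`-weight of a bag. -/
def TreeDecomp.muWidth {H : HGraph V} (td : H.TreeDecomp) (μ : V → ℝ) : ℝ :=
  ⨆ t, ∑ᶠ v ∈ td.bag t, μ v

/-- The `μ`-width of a hypergraph: minimum `μ`-width over tree decompositions. -/
def muWidth (H : HGraph V) (μ : V → ℝ) : ℝ :=
  sInf {w | ∃ td : H.TreeDecomp, td.muWidth μ = w}

/-- The adaptive width `aw(H)`: supremum of the `μ`-widths over fractional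
independent sets `μ`. -/
def adaptiveWidth (H : HGraph V) : ℝ :=
  sSup {w | ∃ μ : V → ℝ, H.IsFracIndep μ ∧ H.muWidth μ = w}

/-- The fractional hypertreewidth `fhtw(H)`. -/
def fhtw (H : HGraph V) : ℝ :=
  sInf {w | ∃ td : H.TreeDecomp, (⨆ t, H.fracCoverOf (td.bag t)) = w}

/-- Add a new vertex `v'` to the hypergraph and replace the hyperedge `e` by `e ∪ {v'}`. -/
def extendEdge (H : HGraph V) (e : Set V) (he : e ∈ H.edges) (v' : V) :
    HGraph V where
  verts := insert v' H.verts
  edges := (H.edges \ {e}) ∪ {insert v' e}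
  edge_nonempty := by
    rintro f (⟨hf, -⟩ | hf)
    · exact H.edge_nonempty f hf
    · rw [Set.mem_singleton_iff] at hf; subst hf; exact ⟨v', Set.mem_insert _ _⟩
  edge_subset := by
    rintro f (⟨hf, -⟩ | hf)
    · exact (H.edge_subset f hf).trans (Set.subset_insert _ _)
    · rw [Set.mem_singleton_iff] at hf; subst hf
      exact Set.insert_subset_insert (H.edge_subset e he)

end HGraph

/-! ### Digraphs -/

namespace Digraph

variable {V A B : Type}

/-- `u` reaches `v` by a directed path (possibly of length 0). -/
def Reaches (G : Digraph V) (u v : V) : Prop := Relation.ReflTransGen G.Adj u v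

/-- `R(u)`: the set of vertices reachable from `u` (including `u`). -/
def reachSet (G : Digraph V) (u : V) : Set V := {v | G.Reaches u v}

/-- The setoid whose classes are the strongly connected components. -/
def sccSetoid (G : Digraph V) : Setoid V where
  r u v := G.Reaches u v ∧ G.Reaches v u
  iseqv := ⟨fun _ => ⟨.refl, .refl⟩, fun h => ⟨h.2, h.1⟩,
    fun h₁ h₂ => ⟨h₁.1.trans h₂.1, h₂.2.trans h₁.2⟩⟩

/-- The condensation `H/∼`: the loop-free DAG obtained by contracting each strongly
connected component to a single vertex. -/
def cond (G : Digraph V) : Digraph (Quotient G.sccSetoid) where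
  Adj X Y := X ≠ Y ∧ ∃ a b, Quotient.mk G.sccSetoid a = X ∧
    Quotient.mk G.sccSetoid b = Y ∧ G.Adj a b

/-- `v` lies in a source component: its strongly connected component is not
reachable from any other component. -/
def InSourceComp (G : Digraph V) (v : V) : Prop := ∀ u, G.Reaches u v → G.Reaches v u

/-- `v` is a source: a vertex of in-degree `0`. -/
def IsSrc (G : Digraph V) (v : V) : Prop := ∀ u, ¬ G.Adj u v

/-- The reachability hypergraph `R(H)` of a digraph: vertices `V(H)`, one hyperedge
`R(s)` for each (representative `s` of a) source component. -/
def reachHyp (G : Digraph V) : HGraph V where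
  verts := Set.univ
  edges := {e | ∃ s, G.InSourceComp s ∧ e = G.reachSet s}
  edge_nonempty := by rintro e ⟨s, -, rfl⟩; exact ⟨s, Relation.ReflTransGen.refl⟩
  edge_subset := fun e _ => Set.subset_univ e

/-- The contour `Γ(H)` of a digraph: the reachability hypergraph with all vertices of
source components deleted (empty hyperedges discarded). -/
def contour (G : Digraph V) : HGraph V where
  verts := {v | ¬ G.InSourceComp v}
  edges := {e | (∃ s, G.InSourceComp s ∧
    e = G.reachSet s \ {v | G.InSourceComp v}) ∧ e.Nonempty}
  edge_nonempty := fun _ he => he.2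
  edge_subset := by rintro e ⟨⟨s, -, rfl⟩, -⟩ v hv; exact hv.2

/-- The reachability hypergraph of a DAG: one hyperedge `R(s)` for each in-degree `0`
vertex `s`. -/
def dagReachHyp (G : Digraph V) : HGraph V where
  verts := Set.univ
  edges := {e | ∃ s, G.IsSrc s ∧ e = G.reachSet s}
  edge_nonempty := by rintro e ⟨s, -, rfl⟩; exact ⟨s, Relation.ReflTransGen.refl⟩
  edge_subset := fun e _ => Set.subset_univ e

/-- The contour of a DAG: the reachability hypergraph with all sources deleted. -/
def dagContour (G : Digraph V) : HGraph V where
  verts := {v | ¬ G.IsSrc v}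
  edges := {e | (∃ s, G.IsSrc s ∧ e = G.reachSet s \ {v | G.IsSrc v}) ∧ e.Nonempty}
  edge_nonempty := fun _ he => he.2
  edge_subset := by rintro e ⟨⟨s, -, rfl⟩, -⟩ v hv; exact hv.2

/-- A homomorphism of digraphs: a map preserving arcs. -/
def IsHom (H : Digraph A) (G : Digraph B) (φ : A → B) : Prop :=
  ∀ ⦃u v⦄, H.Adj u v → G.Adj (φ u) (φ v)

/-- The tensor product of digraphs. -/
def tensor (G : Digraph A) (F : Digraph B) : Digraph (A × B) where
  Adj x y := G.Adj x.1 y.1 ∧ F.Adj x.2 y.2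

/-- The induced subdigraph on a set of vertices. -/
def induce (G : Digraph A) (S : Set A) : Digraph S where
  Adj a b := G.Adj a.1 b.1

/-- The quotient digraph `H/σ` of a digraph by a partition (setoid) of its vertices. -/
def quot (H : Digraph A) (σ : Setoid A) : Digraph (Quotient σ) where
  Adj X Y := ∃ a b, Quotient.mk σ a = X ∧ Quotient.mk σ b = Y ∧ H.Adj a b

/-- A loop-free digraph. -/
def LoopFree (H : Digraph A) : Prop := ∀ v, ¬ H.Adj v v

/-- A digraph without directed cycles (in particular, without loops). -/
def IsAcyclic (H : Digraph A) : Prop := ∀ u v, H.Adj u v → ¬ H.Reaches v u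

/-- A canonical DAG: a DAG in which every vertex has in-degree 0 or out-degree 0. -/
def IsCanonicalDAG (H : Digraph A) : Prop :=
  H.IsAcyclic ∧ ∀ v, (∀ u, ¬ H.Adj u v) ∨ (∀ u, ¬ H.Adj v u)

/-- `t` lies in a sink component: from its strongly connected component no other
component is reachable. -/
def IsSinkVert (H : Digraph A) (t : A) : Prop := ∀ v, H.Reaches t v → H.Reaches v t

/-- Sink deletion: delete all vertices of the strongly connected component of `t`. -/
def sinkDelete (H : Digraph A) (t : A) :
    Digraph {v : A // ¬ (H.Reaches v t ∧ H.Reaches t v)} where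
  Adj a b := H.Adj a.1 b.1

/-- Loop deletion: delete the loop at `u`. -/
def deleteLoop (H : Digraph A) (u : A) : Digraph A where
  Adj a b := H.Adj a b ∧ ¬(a = u ∧ b = u)

/-- The number of sources (in-degree `0` vertices) of the condensation `H/∼`. -/
def numSources (H : Digraph A) : ℕ :=
  {X : Quotient H.sccSetoid | ∀ Y, ¬ H.cond.Adj Y X}.ncard

end Digraph

/-- The number of homomorphisms from `H` to `G`. -/
def homCount {A B : Type} (H : Digraph A) (G : Digraph B) : ℕ :=
  Nat.card {φ : A → B // H.IsHom G φ}

/-- Two digraphs are isomorphic: a bijection of the vertex sets preserving arcs in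
both directions. -/
def DigraphIso {A B : Type} (H : Digraph A) (G : Digraph B) : Prop :=
  ∃ e : A ≃ B, ∀ u v, H.Adj u v ↔ G.Adj (e u) (e v)

/-- The number of subgraphs of `G` (pairs of a vertex subset and an arc subset of `G`
among those vertices) that are isomorphic to `H`. -/
def subCount {A B : Type} (H : Digraph A) (G : Digraph B) : ℕ :=
  Nat.card {p : Set B × (B → B → Prop) //
    (∀ a b, p.2 a b → a ∈ p.1 ∧ b ∈ p.1 ∧ G.Adj a b) ∧
    DigraphIso H (Digraph.mk fun (a b : p.1) => p.2 a b)}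

/-- The number of vertex subsets of `G` inducing a subgraph isomorphic to `H`. -/
def indSubCount {A B : Type} (H : Digraph A) (G : Digraph B) : ℕ :=
  Nat.card {S : Set B // DigraphIso H (G.induce S)}

/-- `H'` is an arc supergraph of the loop-free digraph `H`: a loop-free digraph on the
same vertex set whose arc set contains that of `H`. -/
def ArcSupergraph {A : Type} (H H' : Digraph A) : Prop :=
  H'.LoopFree ∧ ∀ u v, H.Adj u v → H'.Adj u v

/-- The setoid identifying exactly `u` and `v`. -/
def pairSetoid {A : Type} (u v : A) : Setoid A where
  r a b := a = b ∨ (a ∈ ({u, v} : Set A) ∧ b ∈ ({u, v} : Set A))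
  iseqv := by
    refine ⟨fun _ => Or.inl rfl, ?_, ?_⟩
    · rintro a b (rfl | ⟨h₁, h₂⟩)
      · exact Or.inl rfl
      · exact Or.inr ⟨h₂, h₁⟩
    · rintro a b c (rfl | ⟨h₁, h₂⟩) h
      · exact h
      · rcases h with rfl | ⟨h₃, h₄⟩
        · exact Or.inr ⟨h₁, h₂⟩
        · exact Or.inr ⟨h₁, h₄⟩

/-- Arc contraction: identify the endpoints of the arc `(u,v)`; arcs between `u` and
`v` do not yield a loop. -/
def Digraph.contractArc {A : Type} (H : Digraph A) (u v : A) :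
    Digraph (Quotient (pairSetoid u v)) where
  Adj X Y := ∃ a b, Quotient.mk (pairSetoid u v) a = X ∧ Quotient.mk (pairSetoid u v) b = Y ∧
    H.Adj a b ∧ ¬(a ≠ b ∧ a ∈ ({u, v} : Set A) ∧ b ∈ ({u, v} : Set A))

/-- `MRMinor M H`: `M` is a monotone reversible minor of `H`, i.e. `M` can be
obtained (up to isomorphism) from `H` by a finite sequence of sink deletions,
arc contractions, and loop deletions. -/
inductive MRMinor : ∀ {A : Type}, Digraph A → ∀ {B : Type}, Digraph B → Prop
  | of_iso {A B : Type} {M : Digraph A} {H : Digraph B} :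
      DigraphIso M H → MRMinor M H
  | sink_del {A B : Type} {M : Digraph A} {H : Digraph B} (t : B) :
      H.IsSinkVert t → MRMinor M (H.sinkDelete t) → MRMinor M H
  | contract {A B : Type} {M : Digraph A} {H : Digraph B} (u v : B) :
      H.Adj u v → MRMinor M (H.contractArc u v) → MRMinor M H
  | loop_del {A B : Type} {M : Digraph A} {H : Digraph B} (u : B) :
      H.Adj u u → MRMinor M (H.deleteLoop u) → MRMinor M H

/-- `SinkDelSeq H F`: `F` is obtained from `H` by a finite sequence of sink deletions. -/
inductive SinkDelSeq : ∀ {A : Type}, Digraph A → ∀ {B : Type}, Digraph B → Prop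
  | refl {A : Type} (H : Digraph A) : SinkDelSeq H H
  | step {A : Type} {H : Digraph A} (t : A) {B : Type} {F : Digraph B} :
      H.IsSinkVert t → SinkDelSeq (H.sinkDelete t) F → SinkDelSeq H F

/-- The directed split of an undirected graph `F`: vertices `V(F) ⊕ E(F)`, with arcs
from each edge `e = {u,v}` to `u` and to `v`. -/
def dsplit {α : Type} (F : SimpleGraph α) : Digraph (α ⊕ F.edgeSet) where
  Adj x y :=
    match x, y with
    | Sum.inr e, Sum.inl u => u ∈ e.1
    | _, _ => False

/-- `D` has an induced matching gadget of size `k`: arcs `(s i, w i)` with the `w i`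
pairwise distinct such that no source of `D` reaches two distinct `w i`. -/
def HasIMG {A : Type} (D : Digraph A) (k : ℕ) : Prop :=
  ∃ s w : Fin k → A, (∀ i, D.Adj (s i) (w i)) ∧ Function.Injective w ∧
    ∀ x, D.IsSrc x → ∀ i j, D.Reaches x (w i) → D.Reaches x (w j) → i = j

/-- The maximum size of an induced matching gadget of `D`. -/
def imgNum {A : Type} (D : Digraph A) : ℕ := sSup {k | HasIMG D k}

/-- A fractional cover of a DAG `D`: nonnegative weights on the sources such that each
non-source is covered with total weight at least 1; the total weight is at least 1. -/
def Digraph.IsFracCover {A : Type} (D : Digraph A) (ψ : A → ℝ) : Prop :=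
  (∀ s, 0 ≤ ψ s) ∧ (∀ s, ¬ D.IsSrc s → ψ s = 0) ∧
    (∀ v, ¬ D.IsSrc v → 1 ≤ ∑ᶠ s ∈ {s | D.IsSrc s ∧ v ∈ D.reachSet s}, ψ s) ∧
    1 ≤ ∑ᶠ s ∈ {s | D.IsSrc s}, ψ s

/-- The fractional cover number of a DAG: the minimum weight of a fractional cover. -/
def Digraph.dagFracCoverNum {A : Type} (D : Digraph A) : ℝ :=
  sInf {w | ∃ ψ : A → ℝ, D.IsFracCover ψ ∧ (∑ᶠ s ∈ {s | D.IsSrc s}, ψ s) = w}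

/-- The fractional cover number `ρ*(H)` of a digraph: the fractional cover number of
its condensation. -/
def Digraph.fracCoverNum {A : Type} (G : Digraph A) : ℝ := G.cond.dagFracCoverNum

/-! ### Auxiliary development for STATEMENT 2 -/

namespace SCCAux

open scoped Classical

open Digraph Set

variable {V : Type}

/-- The quotient map onto strongly connected components. -/
abbrev qm (H : Digraph V) : V → Quotient H.sccSetoid := Quotient.mk _

variable {H : Digraph V}

lemma qm_out (X : Quotient H.sccSetoid) : qm H X.out = X := Quotient.out_eq X

lemma reaches_cond {u v : V} (h : H.Reaches u v) :
    H.cond.Reaches (qm H u) (qm H v) := by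
  induction h with
  | refl => exact Relation.ReflTransGen.refl
  | @tail b c _ hadj ih =>
    by_cases hq : qm H b = qm H c
    · rwa [← hq]
    · exact ih.tail ⟨hq, b, c, rfl, rfl, hadj⟩

lemma cond_reaches {X Y : Quotient H.sccSetoid} (h : H.cond.Reaches X Y) :
    ∀ u v, qm H u = X → qm H v = Y → H.Reaches u v := by
  induction h with
  | refl =>
    intro u v hu hv
    exact (Quotient.exact (hu.trans hv.symm)).1
  | @tail Y' Y hr hadj ih =>
    intro u v hu hv
    obtain ⟨-, a, b, ha, hb, hab⟩ := hadj
    exact (ih u a hu ha).trans ((Relation.ReflTransGen.single hab).trans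
      (Quotient.exact (hb.trans hv.symm)).1)

lemma reaches_iff {u v : V} : H.cond.Reaches (qm H u) (qm H v) ↔ H.Reaches u v :=
  ⟨fun h => cond_reaches h u v rfl rfl, reaches_cond⟩

lemma inSource_iff {v : V} : H.InSourceComp v ↔ H.cond.InSourceComp (qm H v) := by
  constructor
  · intro h X hX
    obtain ⟨u, rfl⟩ := Quotient.mk_surjective X
    exact reaches_cond (h u (cond_reaches hX u v rfl rfl))
  · intro h u hu
    exact cond_reaches (h _ (reaches_cond hu)) v u rfl rfl

lemma ns_preimage :
    {v | ¬ H.InSourceComp v} = qm H ⁻¹' {X | ¬ H.cond.InSourceComp X} := by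
  ext v; simp only [Set.mem_setOf_eq, Set.mem_preimage, inSource_iff (H := H)]

lemma edge_preimage (s : V) :
    H.reachSet s \ {v | H.InSourceComp v} =
      qm H ⁻¹' (H.cond.reachSet (qm H s) \ {X | H.cond.InSourceComp X}) := by
  ext v
  simp only [Set.mem_diff, Set.mem_preimage, Set.mem_setOf_eq]
  constructor
  · rintro ⟨h1, h2⟩
    exact ⟨reaches_cond h1, fun h => h2 (inSource_iff.2 h)⟩
  · rintro ⟨h1, h2⟩
    exact ⟨cond_reaches h1 s v rfl rfl, fun h => h2 (inSource_iff.1 h)⟩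

lemma image_preimage (T : Set (Quotient H.sccSetoid)) : qm H '' (qm H ⁻¹' T) = T :=
  Set.image_preimage_eq T Quotient.mk_surjective

lemma edges_image :
    H.cond.contour.edges = (Set.image (qm H)) '' H.contour.edges := by
  ext f
  constructor
  · rintro ⟨⟨S, hS, rfl⟩, hne⟩
    obtain ⟨s, rfl⟩ := Quotient.mk_surjective S
    obtain ⟨X, hX⟩ := hne
    obtain ⟨v, rfl⟩ := Quotient.mk_surjective X
    have hvmem : v ∈ H.reachSet s \ {v | H.InSourceComp v} := by
      rw [edge_preimage s]; exact hX
    refine ⟨H.reachSet s \ {v | H.InSourceComp v},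
      ⟨⟨s, inSource_iff.2 hS, rfl⟩, ⟨v, hvmem⟩⟩, ?_⟩
    show qm H '' (H.reachSet s \ {v | H.InSourceComp v}) = _
    rw [edge_preimage s, image_preimage]
  · rintro ⟨e, ⟨⟨s, hs, rfl⟩, hne⟩, rfl⟩
    refine ⟨⟨qm H s, inSource_iff.1 hs, ?_⟩, hne.image _⟩
    show qm H '' (H.reachSet s \ {v | H.InSourceComp v}) = _
    rw [edge_preimage s, image_preimage]

lemma preimage_edge {e : Set V} (he : e ∈ H.contour.edges) :
    qm H ⁻¹' (qm H '' e) = e := by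
  obtain ⟨⟨s, hs, rfl⟩, -⟩ := he
  rw [edge_preimage s, image_preimage]

lemma bijOn_edges :
    Set.BijOn (Set.image (qm H)) H.contour.edges H.cond.contour.edges := by
  have hinj : Set.InjOn (Set.image (qm H)) H.contour.edges := by
    intro e₁ h₁ e₂ h₂ h
    rw [← preimage_edge h₁, ← preimage_edge h₂, h]
  rw [edges_image]
  exact hinj.bijOn_image

lemma bijOn_edges_mem (v : V) :
    Set.BijOn (Set.image (qm H)) {e ∈ H.contour.edges | v ∈ e}
      {f ∈ H.cond.contour.edges | qm H v ∈ f} := by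
  refine ⟨?_, fun e₁ h₁ e₂ h₂ h => bijOn_edges.injOn h₁.1 h₂.1 h, ?_⟩
  · rintro e ⟨he, hv⟩
    exact ⟨bijOn_edges.mapsTo he, Set.mem_image_of_mem _ hv⟩
  · rintro f ⟨hf, hXf⟩
    obtain ⟨e, he, rfl⟩ := bijOn_edges.surjOn hf
    refine ⟨e, ⟨he, ?_⟩, rfl⟩
    have : v ∈ qm H ⁻¹' (qm H '' e) := hXf
    rwa [preimage_edge he] at this

section Finite
variable [Finite V]

lemma finsum_preimage (f : V → ℝ) (T : Set (Quotient H.sccSetoid)) :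
    ∑ᶠ v ∈ qm H ⁻¹' T, f v = ∑ᶠ X ∈ T, ∑ᶠ v ∈ qm H ⁻¹' {X}, f v := by
  have h : qm H ⁻¹' T = ⋃ X ∈ T, qm H ⁻¹' {X} := by
    ext v; simp
  rw [h, finsum_mem_biUnion]
  · intro X _ Y _ hne
    simp only [Function.onFun, Set.disjoint_left, Set.mem_preimage, Set.mem_singleton_iff]
    rintro v rfl rfl; exact hne rfl
  · exact T.toFinite
  · exact fun X _ => Set.toFinite _

omit [Finite V] in
lemma finsum_fiber_rep (g : Quotient H.sccSetoid → ℝ) (X : Quotient H.sccSetoid) :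
    ∑ᶠ v ∈ qm H ⁻¹' {X}, (if (qm H v).out = v then g (qm H v) else 0) = g X := by
  have h : ∑ᶠ v ∈ qm H ⁻¹' {X}, (if (qm H v).out = v then g (qm H v) else 0) =
      ∑ᶠ v ∈ ({X.out} : Set V), (if (qm H v).out = v then g (qm H v) else 0) := by
    apply finsum_mem_inter_support_eq
    ext v
    simp only [Set.mem_inter_iff, Set.mem_preimage, Set.mem_singleton_iff,
      Function.mem_support]
    constructor
    · rintro ⟨rfl, hne⟩
      refine ⟨?_, hne⟩
      by_contra hout
      rw [if_neg (fun hh => hout hh.symm)] at hne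
      exact hne rfl
    · rintro ⟨rfl, hne⟩
      exact ⟨Quotient.out_eq X, hne⟩
  rw [h, finsum_mem_singleton, qm_out, if_pos rfl]

lemma finsum_rep (g : Quotient H.sccSetoid → ℝ) (T : Set (Quotient H.sccSetoid)) :
    ∑ᶠ v ∈ qm H ⁻¹' T, (if (qm H v).out = v then g (qm H v) else 0) = ∑ᶠ X ∈ T, g X := by
  rw [finsum_preimage]
  exact finsum_mem_congr rfl fun X _ => finsum_fiber_rep g X

lemma finsum_mem_le_finsum_mem {α : Type} [Finite α] {f : α → ℝ} (hf : ∀ v, 0 ≤ f v)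
    {s t : Set α} (h : s ⊆ t) : ∑ᶠ v ∈ s, f v ≤ ∑ᶠ v ∈ t, f v := by
  classical
  rw [finsum_mem_eq_finite_toFinset_sum _ s.toFinite,
    finsum_mem_eq_finite_toFinset_sum _ t.toFinite]
  refine Finset.sum_le_sum_of_subset_of_nonneg ?_ fun i _ _ => hf i
  intro x hx
  simp only [Set.Finite.mem_toFinset] at hx ⊢
  exact h hx

lemma finsum_mem_nonneg {α : Type} [Finite α] {f : α → ℝ} (hf : ∀ v, 0 ≤ f v)
    (s : Set α) : 0 ≤ ∑ᶠ v ∈ s, f v := by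
  have := finsum_mem_le_finsum_mem hf (Set.empty_subset s)
  rwa [finsum_mem_empty] at this

lemma exists_source (v : V) : ∃ s, H.InSourceComp s ∧ H.Reaches s v := by
  classical
  cases nonempty_fintype V
  have hvmem : v ∈ Finset.univ.filter (fun u => H.Reaches u v) := by
    simp only [Finset.mem_filter, Finset.mem_univ, true_and]
    exact Relation.ReflTransGen.refl
  obtain ⟨s, hs, hmax⟩ := Finset.exists_max_image
    (Finset.univ.filter (fun u => H.Reaches u v)) (fun u => (H.reachSet u).ncard)
    ⟨v, hvmem⟩
  simp only [Finset.mem_filter, Finset.mem_univ, true_and] at hs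
  refine ⟨s, ?_, hs⟩
  intro u hu
  by_contra hns
  have hss : H.reachSet s ⊂ H.reachSet u := by
    rw [Set.ssubset_def]
    exact ⟨fun w hw => hu.trans hw, fun hsub => hns (hsub Relation.ReflTransGen.refl)⟩
  have hlt : (H.reachSet s).ncard < (H.reachSet u).ncard :=
    Set.ncard_lt_ncard hss (Set.toFinite _)
  have hle : (H.reachSet u).ncard ≤ (H.reachSet s).ncard := by
    refine hmax u ?_
    simp only [Finset.mem_filter, Finset.mem_univ, true_and]
    exact hu.trans hs
  omega

end Finite

end SCCAux


theorem stmt2 {V : Type} [Fintype V] (H : Digraph V) :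
    H.contour.fracIndepNum = H.cond.contour.fracIndepNum ∧
      H.contour.fracEdgeCoverNum = H.cond.contour.fracEdgeCoverNum := by
  classical
  open SCCAux in
  -- basic facts
  have hvertsH : H.contour.verts = {v | ¬ H.InSourceComp v} := rfl
  have hvertsC : H.cond.contour.verts = {X | ¬ H.cond.InSourceComp X} := rfl
  -- a non-source class has a non-source representative lying in some edge,
  -- and the whole fiber of the class is contained in that edge
  have fiber_edge : ∀ X : Quotient H.sccSetoid, ¬ H.cond.InSourceComp X →
      ∃ e ∈ H.contour.edges, qm H ⁻¹' {X} ⊆ e ∧ X.out ∈ e := by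
    intro X hX
    have hqout : qm H X.out = X := Quotient.out_eq X
    have hv0 : ¬ H.InSourceComp X.out := fun h => hX (by
      have := inSource_iff.1 h; rwa [hqout] at this)
    obtain ⟨s, hs, hr⟩ := exists_source (H := H) X.out
    have hv0e : X.out ∈ H.reachSet s \ {v | H.InSourceComp v} := ⟨hr, hv0⟩
    refine ⟨H.reachSet s \ {v | H.InSourceComp v}, ⟨⟨s, hs, rfl⟩, ⟨X.out, hv0e⟩⟩, ?_, hv0e⟩
    intro v hv
    simp only [Set.mem_preimage, Set.mem_singleton_iff] at hv
    have hvv0 : H.Reaches X.out v := (Quotient.exact ((hqout.trans hv.symm))).1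
    refine ⟨hr.trans hvv0, fun h => ?_⟩
    exact hX (by have := inSource_iff.1 h; rwa [hv] at this)
  constructor
  · -- fractional independence number
    unfold HGraph.fracIndepNum
    congr 1
    ext w
    constructor
    · rintro ⟨μ, ⟨hb, hz, he⟩, rfl⟩
      set ν : Quotient H.sccSetoid → ℝ := fun X => ∑ᶠ v ∈ qm H ⁻¹' {X}, μ v with hν
      have hν0 : ∀ X, 0 ≤ ν X := fun X => finsum_mem_nonneg (fun v => (hb v).1) _
      have hνz : ∀ X, H.cond.InSourceComp X → ν X = 0 := by
        intro X hX
        refine finsum_mem_eq_zero_of_forall_eq_zero fun v hv => ?_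
        simp only [Set.mem_preimage, Set.mem_singleton_iff] at hv
        refine hz v ?_
        simp only [hvertsH, Set.mem_setOf_eq, not_not]
        exact inSource_iff.2 (hv ▸ hX)
      refine ⟨ν, ⟨fun X => ⟨hν0 X, ?_⟩, fun X hX => ?_, fun f hf => ?_⟩, ?_⟩
      · -- ν X ≤ 1
        by_cases hX : H.cond.InSourceComp X
        · rw [hνz X hX]; norm_num
        · obtain ⟨e, he', hsub, -⟩ := fiber_edge X hX
          exact le_trans (finsum_mem_le_finsum_mem (fun v => (hb v).1) hsub) (he e he')
      · -- vanishing off verts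
        exact hνz X (by simpa [hvertsC, not_not] using hX)
      · -- edge condition
        rw [edges_image] at hf
        obtain ⟨e, he', rfl⟩ := hf
        have : ∑ᶠ X ∈ qm H '' e, ν X = ∑ᶠ v ∈ e, μ v := by
          rw [hν, ← finsum_preimage, preimage_edge he']
        rw [this]
        exact he e he'
      · -- weight
        show (∑ᶠ X ∈ {X | ¬ H.cond.InSourceComp X}, ν X) = ∑ᶠ v ∈ H.contour.verts, μ v
        rw [hν, ← finsum_preimage, hvertsH, ← ns_preimage]
    · rintro ⟨ν, ⟨hb, hz, he⟩, rfl⟩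
      set μ : V → ℝ := fun v => if (qm H v).out = v then ν (qm H v) else 0 with hμ
      refine ⟨μ, ⟨fun v => ?_, fun v hv => ?_, fun e he' => ?_⟩, ?_⟩
      · simp only [hμ]; split_ifs with h
        · exact hb _
        · norm_num
      · -- vanishing
        simp only [hvertsH, Set.mem_setOf_eq, not_not] at hv
        simp only [hμ]
        split_ifs with h
        · exact hz _ (by simp [hvertsC, not_not, inSource_iff.1 hv])
        · rfl
      · -- edges
        have h1 : ∑ᶠ v ∈ e, μ v = ∑ᶠ X ∈ qm H '' e, ν X := by
          conv_lhs => rw [← preimage_edge he']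
          exact finsum_rep ν _
        rw [h1]
        exact he _ (bijOn_edges.mapsTo he')
      · -- weight
        show (∑ᶠ v ∈ H.contour.verts, μ v) = ∑ᶠ X ∈ {X | ¬ H.cond.InSourceComp X}, ν X
        rw [hvertsH, ns_preimage (H := H)]
        exact finsum_rep ν _
  · -- fractional edge cover number
    unfold HGraph.fracEdgeCoverNum HGraph.fracCoverOf
    congr 1
    ext w
    constructor
    · rintro ⟨γ, ⟨hγ0, hγz, hγc⟩, rfl⟩
      set γ' : Set (Quotient H.sccSetoid) → ℝ :=
        fun f => if f ∈ H.cond.contour.edges then γ (qm H ⁻¹' f) else 0 with hγ'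
      have hcongr : ∀ e ∈ H.contour.edges, γ e = γ' (qm H '' e) := by
        intro e he
        simp only [hγ', if_pos (bijOn_edges.mapsTo he), preimage_edge he]
      refine ⟨γ', ⟨fun f => ?_, fun f hf => ?_, fun X hX => ?_⟩, ?_⟩
      · simp only [hγ']; split_ifs; exacts [hγ0 _, le_refl 0]
      · simp only [hγ', if_neg hf]
      · -- covering
        simp only [hvertsC, Set.mem_setOf_eq] at hX
        obtain ⟨e0, he0, -, hout⟩ := fiber_edge X hX
        have hv0 : X.out ∈ H.contour.verts := by
          simp only [hvertsH, Set.mem_setOf_eq]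
          intro h
          exact hX (by have := inSource_iff.1 h; rwa [qm_out] at this)
        have h1 := hγc X.out hv0
        have h2 : ∑ᶠ e ∈ {e ∈ H.contour.edges | X.out ∈ e}, γ e =
            ∑ᶠ f ∈ {f ∈ H.cond.contour.edges | qm H X.out ∈ f}, γ' f :=
          finsum_mem_eq_of_bijOn _ (bijOn_edges_mem X.out) fun e heme => hcongr e heme.1
        rw [h2, qm_out] at h1
        exact h1
      · -- cover weight
        show (∑ᶠ f ∈ H.cond.contour.edges, γ' f) = ∑ᶠ e ∈ H.contour.edges, γ e
        exact (finsum_mem_eq_of_bijOn _ bijOn_edges hcongr).symm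
    · rintro ⟨γ', ⟨hγ0, hγz, hγc⟩, rfl⟩
      set γ : Set V → ℝ := fun e => if e ∈ H.contour.edges then γ' (qm H '' e) else 0 with hγ
      have hcongr : ∀ e ∈ H.contour.edges, γ e = γ' (qm H '' e) := by
        intro e he
        simp only [hγ, if_pos he]
      refine ⟨γ, ⟨fun e => ?_, fun e he => ?_, fun v hv => ?_⟩, ?_⟩
      · simp only [hγ]; split_ifs; exacts [hγ0 _, le_refl 0]
      · simp only [hγ, if_neg he]
      · -- covering
        have hvC : qm H v ∈ H.cond.contour.verts := by
          simp only [hvertsH, Set.mem_setOf_eq] at hv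
          simpa [hvertsC] using fun h => hv (inSource_iff.2 h)
        have h1 := hγc (qm H v) hvC
        have h2 : ∑ᶠ e ∈ {e ∈ H.contour.edges | v ∈ e}, γ e =
            ∑ᶠ f ∈ {f ∈ H.cond.contour.edges | qm H v ∈ f}, γ' f :=
          finsum_mem_eq_of_bijOn _ (bijOn_edges_mem v) fun e heme => hcongr e heme.1
        rw [← h2] at h1
        exact h1
      · -- cover weight
        show (∑ᶠ e ∈ H.contour.edges, γ e) = ∑ᶠ f ∈ H.cond.contour.edges, γ' f
        exact finsum_mem_eq_of_bijOn _ bijOn_edges hcongr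


end
end

section
/- Let H be a digraph and let H' be a quotient of H. Then the fractional cover number does not increase under taking quotients: ρ*(H') ≤ ρ*(H). -/
noncomputable section

namespace Stmt10Aux

variable {W : Type}

lemma quot_reaches {H : Digraph W} (σ : Setoid W) {a b : W} (h : H.Reaches a b) :
    (H.quot σ).Reaches (Quotient.mk σ a) (Quotient.mk σ b) := by
  induction h with
  | refl => exact Relation.ReflTransGen.refl
  | tail _ hadj ih => exact ih.tail ⟨_, _, rfl, rfl, hadj⟩

lemma cond_reaches_aux {G : Digraph W} {X Y} (h : G.cond.Reaches X Y) :
    ∀ a b, Quotient.mk G.sccSetoid a = X → Quotient.mk G.sccSetoid b = Y → G.Reaches a b := by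
  induction h with
  | refl =>
    intro a b ha hb
    exact (Quotient.exact (ha.trans hb.symm) : G.sccSetoid.r a b).1
  | tail _ hadj ih =>
    intro a b ha hb
    obtain ⟨-, a', b', ha', hb', hab⟩ := hadj
    exact ((ih a a' ha ha').tail hab).trans
      (Quotient.exact (hb'.trans hb.symm) : G.sccSetoid.r b' b).1

lemma cond_reaches {G : Digraph W} {a b : W} (h : G.Reaches a b) :
    G.cond.Reaches (Quotient.mk G.sccSetoid a) (Quotient.mk G.sccSetoid b) := by
  induction h with
  | refl => exact Relation.ReflTransGen.refl
  | @tail c d _ hadj ih =>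
    by_cases hq : Quotient.mk G.sccSetoid c = Quotient.mk G.sccSetoid d
    · rw [← hq]; exact ih
    · exact ih.tail ⟨hq, c, d, rfl, rfl, hadj⟩

lemma cond_antisymm {G : Digraph W} {X Y} (h1 : G.cond.Reaches X Y)
    (h2 : G.cond.Reaches Y X) : X = Y := by
  induction X using Quotient.ind with | _ a => ?_
  induction Y using Quotient.ind with | _ b => ?_
  exact Quotient.sound ⟨cond_reaches_aux h1 a b rfl rfl, cond_reaches_aux h2 b a rfl rfl⟩

lemma cond_loopfree (G : Digraph W) (X) : ¬ G.cond.Adj X X := fun h => h.1 rfl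

lemma exists_src_reaches {G : Digraph W} [Finite W]
    (hanti : ∀ X Y, G.Reaches X Y → G.Reaches Y X → X = Y)
    (hloop : ∀ X, ¬ G.Adj X X) (Y : W) :
    ∃ S, G.IsSrc S ∧ G.Reaches S Y := by
  have key : ∀ n (Y : W), ({Z | G.Reaches Z Y}).ncard ≤ n →
      ∃ S, G.IsSrc S ∧ G.Reaches S Y := by
    intro n
    induction n with
    | zero =>
      intro Y hY
      have h2 : 0 < ({Z | G.Reaches Z Y}).ncard :=
        (Set.ncard_pos (Set.toFinite _)).mpr ⟨Y, Relation.ReflTransGen.refl⟩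
      omega
    | succ n ih =>
      intro Y hY
      by_cases hsrc : G.IsSrc Y
      · exact ⟨Y, hsrc, Relation.ReflTransGen.refl⟩
      · obtain ⟨U, hU⟩ : ∃ U, G.Adj U Y := by
          simpa [Digraph.IsSrc] using hsrc
        have hsub : {Z | G.Reaches Z U} ⊆ {Z | G.Reaches Z Y} := fun Z hZ => hZ.tail hU
        have hYnot : Y ∉ {Z | G.Reaches Z U} := by
          intro hmem
          have hUY : G.Reaches U Y := Relation.ReflTransGen.single hU
          have heq := hanti Y U hmem hUY
          rw [heq] at hU
          exact hloop U hU
        have hss : {Z | G.Reaches Z U} ⊂ {Z | G.Reaches Z Y} :=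
          ⟨hsub, fun hsup => hYnot (hsup Relation.ReflTransGen.refl)⟩
        have hlt := Set.ncard_lt_ncard hss (Set.toFinite _)
        obtain ⟨S, hS1, hS2⟩ := ih U (by omega)
        exact ⟨S, hS1, hS2.tail hU⟩
  exact key _ Y le_rfl

/-- The natural map from the condensation of `H` to the condensation of `H/σ`. -/
def gmap (H : Digraph W) (σ : Setoid W) :
    Quotient H.sccSetoid → Quotient (H.quot σ).sccSetoid :=
  Quotient.lift (fun a => Quotient.mk _ (Quotient.mk σ a)) (fun a b hab =>
    Quotient.sound ⟨quot_reaches σ hab.1, quot_reaches σ hab.2⟩)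

lemma gmap_mk (H : Digraph W) (σ : Setoid W) (a : W) :
    gmap H σ (Quotient.mk H.sccSetoid a)
      = Quotient.mk (H.quot σ).sccSetoid (Quotient.mk σ a) := rfl

lemma gmap_reaches {H : Digraph W} {σ : Setoid W} {X Y}
    (h : H.cond.Reaches X Y) :
    (H.quot σ).cond.Reaches (gmap H σ X) (gmap H σ Y) := by
  induction X using Quotient.ind with | _ a => ?_
  induction Y using Quotient.ind with | _ b => ?_
  exact cond_reaches (quot_reaches σ (cond_reaches_aux h a b rfl rfl))

lemma exists_nonsrc_preimage {H : Digraph W} {σ : Setoid W} {Y}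
    (hY : ¬ (H.quot σ).cond.IsSrc Y) :
    ∃ w : W, gmap H σ (Quotient.mk H.sccSetoid w) = Y ∧
      ¬ H.cond.IsSrc (Quotient.mk H.sccSetoid w) := by
  obtain ⟨Z, hZ⟩ : ∃ Z, (H.quot σ).cond.Adj Z Y := by
    simpa [Digraph.IsSrc] using hY
  obtain ⟨hne, p, q, hp, hq, hpq⟩ := hZ
  obtain ⟨u, w, hu, hw, huw⟩ := hpq
  refine ⟨w, by rw [gmap_mk, hw]; exact hq, ?_⟩
  intro hsrc
  have hne' : Quotient.mk H.sccSetoid u = Quotient.mk H.sccSetoid w := by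
    by_contra hq2
    exact hsrc _ ⟨hq2, u, w, rfl, rfl, huw⟩
  apply hne
  have h3 : gmap H σ (Quotient.mk H.sccSetoid u) = gmap H σ (Quotient.mk H.sccSetoid w) :=
    congrArg _ hne'
  rw [gmap_mk, gmap_mk, hu, hw] at h3
  rw [← hp, ← hq]
  exact h3

lemma single_le_finsum_mem {α : Type} {T : Set α} (hT : T.Finite) {f : α → ℝ}
    (hf : ∀ x, 0 ≤ f x) {a : α} (ha : a ∈ T) : f a ≤ ∑ᶠ x ∈ T, f x := by
  rw [finsum_mem_eq_finite_toFinset_sum _ hT]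
  exact Finset.single_le_sum (fun x _ => hf x) (hT.mem_toFinset.mpr ha)

end Stmt10Aux

open Stmt10Aux in
theorem stmt10 {V : Type} [Fintype V] (H : Digraph V) (σ : Setoid V) :
    (H.quot σ).fracCoverNum ≤ H.fracCoverNum := by
  classical
  unfold Digraph.fracCoverNum Digraph.dagFracCoverNum
  rcases isEmpty_or_nonempty V with hV | hV
  · have hempty : ∀ {α : Type} (G : Digraph α), IsEmpty α →
        {w | ∃ ψ : α → ℝ, G.IsFracCover ψ ∧ (∑ᶠ s ∈ {s | G.IsSrc s}, ψ s) = w} = ∅ := by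
      intro α G hα
      ext w
      simp only [Set.mem_setOf_eq, Set.mem_empty_iff_false, iff_false]
      rintro ⟨ψ, ⟨-, -, -, h4⟩, -⟩
      rw [show {s : α | G.IsSrc s} = ∅ from Set.eq_empty_of_isEmpty _,
        finsum_mem_empty] at h4
      linarith
    have e1 : IsEmpty (Quotient H.sccSetoid) :=
      ⟨fun X => Quotient.ind (motive := fun _ => False) (fun a => (hV.false a).elim) X⟩
    have e2 : IsEmpty (Quotient (H.quot σ).sccSetoid) :=
      ⟨fun X => Quotient.ind (motive := fun _ => False) (fun p =>
        Quotient.ind (motive := fun _ => False) (fun a => (hV.false a).elim) p) X⟩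
    rw [hempty H.cond e1, hempty (H.quot σ).cond e2]
  · -- basic facts about the two condensations
    have hantiD : ∀ X Y, H.cond.Reaches X Y → H.cond.Reaches Y X → X = Y :=
      fun _ _ => cond_antisymm
    have hantiD' : ∀ X Y, (H.quot σ).cond.Reaches X Y → (H.quot σ).cond.Reaches Y X → X = Y :=
      fun _ _ => cond_antisymm
    choose π hπsrc hπreach using
      fun Y => exists_src_reaches hantiD' (cond_loopfree (H.quot σ)) Y
    -- the set for `H` is nonempty: the all-ones weighting on sources is a cover
    have hSne : {w | ∃ ψ : Quotient H.sccSetoid → ℝ, H.cond.IsFracCover ψ ∧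
        (∑ᶠ s ∈ {s | H.cond.IsSrc s}, ψ s) = w}.Nonempty := by
      refine ⟨_, fun X => if H.cond.IsSrc X then (1 : ℝ) else 0, ⟨?_, ?_, ?_, ?_⟩, rfl⟩
      · intro s; dsimp only; split_ifs <;> norm_num
      · intro s hs; simp [hs]
      · intro v hv
        obtain ⟨s₀, hs₀src, hs₀r⟩ :=
          exists_src_reaches hantiD (cond_loopfree H) v
        have hmem : s₀ ∈ {s | H.cond.IsSrc s ∧ v ∈ H.cond.reachSet s} := ⟨hs₀src, hs₀r⟩
        calc (1 : ℝ) = (if H.cond.IsSrc s₀ then (1 : ℝ) else 0) := by simp [hs₀src]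
          _ ≤ _ := by
              refine single_le_finsum_mem
                (f := fun X => if H.cond.IsSrc X then (1 : ℝ) else 0)
                (Set.toFinite _) (fun x => ?_) hmem
              split_ifs <;> norm_num
      · obtain ⟨x⟩ := hV
        obtain ⟨s₀, hs₀src, -⟩ := exists_src_reaches hantiD (cond_loopfree H)
          (Quotient.mk H.sccSetoid x)
        have hmem : s₀ ∈ {s | H.cond.IsSrc s} := hs₀src
        calc (1 : ℝ) = (if H.cond.IsSrc s₀ then (1 : ℝ) else 0) := by simp [hs₀src]
          _ ≤ _ := by
              refine single_le_finsum_mem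
                (f := fun X => if H.cond.IsSrc X then (1 : ℝ) else 0)
                (Set.toFinite _) (fun x => ?_) hmem
              split_ifs <;> norm_num
    have hbdd : BddBelow {w | ∃ ψ : Quotient (H.quot σ).sccSetoid → ℝ,
        (H.quot σ).cond.IsFracCover ψ ∧ (∑ᶠ s ∈ {s | (H.quot σ).cond.IsSrc s}, ψ s) = w} := by
      refine ⟨1, ?_⟩
      rintro w ⟨ψ, ⟨-, -, -, h4⟩, rfl⟩
      exact h4
    apply le_csInf hSne
    rintro w ⟨ψ, ⟨hψ0, hψz, hψcov, hψtot⟩, rfl⟩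
    apply csInf_le hbdd
    haveI : Fintype (Quotient H.sccSetoid) := Fintype.ofFinite _
    haveI : Fintype (Quotient (H.quot σ).sccSetoid) := Fintype.ofFinite _
    set g := gmap H σ with hg
    -- the pushforward cover
    set ψ' : Quotient (H.quot σ).sccSetoid → ℝ :=
      fun Y => ∑ᶠ X ∈ {X | H.cond.IsSrc X ∧ π (g X) = Y}, ψ X with hψ'
    -- generic fiberwise computation
    have hfiber : ∀ t : Finset (Quotient (H.quot σ).sccSetoid),
        (∀ X : Quotient H.sccSetoid, H.cond.IsSrc X → π (g X) ∈ t → True) →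
        (∑ Y ∈ t, ψ' Y) =
          ∑ X ∈ Finset.univ.filter (fun X => H.cond.IsSrc X ∧ π (g X) ∈ t), ψ X := by
      intro t _
      rw [← Finset.sum_fiberwise_of_maps_to (g := fun X => π (g X))
        (fun X hX => (Finset.mem_filter.mp hX).2.2) ψ]
      apply Finset.sum_congr rfl
      intro Y hY
      simp only [hψ']
      rw [finsum_mem_eq_finite_toFinset_sum _ (Set.toFinite _)]
      apply Finset.sum_congr _ (fun _ _ => rfl)
      ext X
      simp only [Set.Finite.mem_toFinset, Set.mem_setOf_eq, Finset.mem_filter,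
        Finset.mem_univ, true_and]
      constructor
      · rintro ⟨h1, h2⟩
        exact ⟨⟨h1, by rw [h2]; exact hY⟩, h2⟩
      · rintro ⟨⟨h1, -⟩, h2⟩
        exact ⟨h1, h2⟩
    -- total weight is preserved
    have htotal : (∑ᶠ Y ∈ {Y | (H.quot σ).cond.IsSrc Y}, ψ' Y)
        = ∑ᶠ X ∈ {X | H.cond.IsSrc X}, ψ X := by
      rw [finsum_mem_eq_finite_toFinset_sum _ (Set.toFinite _), finsum_mem_eq_finite_toFinset_sum _ (Set.toFinite _)]
      have h1 : (Set.toFinite {Y | (H.quot σ).cond.IsSrc Y}).toFinset =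
          Finset.univ.filter (fun Y => (H.quot σ).cond.IsSrc Y) := by
        ext Y; simp [Set.Finite.mem_toFinset]
      rw [h1, hfiber _ (fun _ _ _ => trivial)]
      apply Finset.sum_congr _ (fun _ _ => rfl)
      ext X
      simp only [Set.Finite.mem_toFinset, Set.mem_setOf_eq, Finset.mem_filter,
        Finset.mem_univ, true_and]
      constructor
      · exact fun h => h.1
      · intro h1
        exact ⟨h1, hπsrc _⟩
    refine ⟨ψ', ⟨?_, ?_, ?_, ?_⟩, htotal⟩
    · -- nonneg
      intro Y
      simp only [hψ']
      rw [finsum_mem_eq_finite_toFinset_sum _ (Set.toFinite _)]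
      exact Finset.sum_nonneg fun x _ => hψ0 x
    · -- supported on sources
      intro Y hY
      simp only [hψ']
      have hset : {X | H.cond.IsSrc X ∧ π (g X) = Y} = ∅ := by
        ext X
        simp only [Set.mem_setOf_eq, Set.mem_empty_iff_false, iff_false]
        rintro ⟨-, hXY⟩
        exact hY (hXY ▸ hπsrc (g X))
      rw [hset, finsum_mem_empty]
    · -- covering condition
      intro v hv
      obtain ⟨w0, hw0, hw0ns⟩ := exists_nonsrc_preimage hv
      rw [finsum_mem_eq_finite_toFinset_sum _ (Set.toFinite _)]
      have h1 : (Set.toFinite {Y | (H.quot σ).cond.IsSrc Y ∧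
          v ∈ (H.quot σ).cond.reachSet Y}).toFinset =
          Finset.univ.filter (fun Y => (H.quot σ).cond.IsSrc Y ∧
            v ∈ (H.quot σ).cond.reachSet Y) := by
        ext Y; simp [Set.Finite.mem_toFinset]
      rw [h1, hfiber _ (fun _ _ _ => trivial)]
      have hsub : Finset.univ.filter (fun X => H.cond.IsSrc X ∧
          Quotient.mk H.sccSetoid w0 ∈ H.cond.reachSet X) ⊆
          Finset.univ.filter (fun X => H.cond.IsSrc X ∧ π (g X) ∈
            Finset.univ.filter (fun Y => (H.quot σ).cond.IsSrc Y ∧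
              v ∈ (H.quot σ).cond.reachSet Y)) := by
        intro X hX
        obtain ⟨-, hXsrc, hXr⟩ := Finset.mem_filter.mp hX
        refine Finset.mem_filter.mpr ⟨Finset.mem_univ _, hXsrc, Finset.mem_filter.mpr
          ⟨Finset.mem_univ _, hπsrc _, ?_⟩⟩
        have hr1 : (H.quot σ).cond.Reaches (g X) v := by
          rw [← hw0]
          exact gmap_reaches hXr
        exact (hπreach (g X)).trans hr1
      calc (1 : ℝ) ≤ ∑ᶠ s ∈ {s | H.cond.IsSrc s ∧
            Quotient.mk H.sccSetoid w0 ∈ H.cond.reachSet s}, ψ s := hψcov _ hw0ns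
        _ = ∑ X ∈ Finset.univ.filter (fun X => H.cond.IsSrc X ∧
              Quotient.mk H.sccSetoid w0 ∈ H.cond.reachSet X), ψ X := by
            rw [finsum_mem_eq_finite_toFinset_sum _ (Set.toFinite _)]
            apply Finset.sum_congr _ (fun _ _ => rfl)
            ext X; simp [Set.Finite.mem_toFinset]
        _ ≤ _ := Finset.sum_le_sum_of_subset_of_nonneg hsub (fun x _ _ => hψ0 x)
    · -- total weight at least 1
      rw [htotal]
      exact hψtot

end
end

section
/- For every digraph H, the fractional hypertreewidth of the reachability hypergraph of H is at most the fractional cover number of H: fhtw(R(H)) ≤ ρ*(H). -/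
noncomputable section

/-! ### Auxiliary lemmas -/

namespace Digraph

variable {V : Type} (H : Digraph V)

lemma reachSet_congr {s s' : V} (h : H.sccSetoid.r s s') :
    H.reachSet s = H.reachSet s' := by
  ext v
  exact ⟨fun hv => h.2.trans hv, fun hv => h.1.trans hv⟩

/-- Every vertex is reachable from a vertex in a source component. -/
lemma exists_source_reaches [Fintype V] (v : V) :
    ∃ s, H.InSourceComp s ∧ H.Reaches s v := by
  classical
  letI : Preorder V :=
    { le := fun a b => H.Reaches a b
      lt := fun a b => H.Reaches a b ∧ ¬ H.Reaches b a
      le_refl := fun a => Relation.ReflTransGen.refl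
      le_trans := fun a b c hab hbc => Relation.ReflTransGen.trans hab hbc
      lt_iff_le_not_ge := fun a b => Iff.rfl }
  obtain ⟨m, hm, hmin⟩ := (Finset.univ.filter (fun u => H.Reaches u v)).exists_minimal
    ⟨v, by simp only [Finset.mem_filter, Finset.mem_univ, true_and]; exact Relation.ReflTransGen.refl⟩
  simp only [Finset.mem_filter, Finset.mem_univ, true_and] at hm
  refine ⟨m, fun u hu => ?_, hm⟩
  by_contra hmu
  exact hmu (hmin (by simp only [Finset.mem_filter, Finset.mem_univ, true_and]; exact Relation.ReflTransGen.trans hu hm) hu)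

/-- If `u` reaches `s` but not conversely, there is an arc entering the
strongly connected component of `s` from outside. -/
lemma exists_arc_into {u s : V} (hus : H.Reaches u s) (hsu : ¬ H.Reaches s u) :
    ∃ a b, H.Adj a b ∧ H.sccSetoid.r b s ∧ ¬ H.sccSetoid.r a s := by
  induction hus using Relation.ReflTransGen.head_induction_on with
  | refl => exact absurd Relation.ReflTransGen.refl hsu
  | head hac hcs ih =>
    rename_i a c
    by_cases hsc : H.Reaches s c
    · exact ⟨a, c, hac, ⟨hcs, hsc⟩, fun hr => hsu hr.2⟩
    · exact ih hsc

lemma inSourceComp_iff_isSrc {s : V} :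
    H.InSourceComp s ↔ H.cond.IsSrc (Quotient.mk H.sccSetoid s) := by
  constructor
  · rintro hs Y ⟨hne, a, b, rfl, hb, hab⟩
    refine hne ?_
    have hbs : H.sccSetoid.r b s := Quotient.exact hb
    have has : H.Reaches a s := (Relation.ReflTransGen.single hab).trans hbs.1
    have hsa : H.Reaches s a := hs a has
    exact Quotient.sound ⟨has, hsa⟩
  · intro hsrc u hus
    by_contra hsu
    obtain ⟨a, b, hab, hbs, has⟩ := H.exists_arc_into hus hsu
    exact hsrc (Quotient.mk H.sccSetoid a)
      ⟨fun h => has (Quotient.exact h), a, b, rfl, Quotient.sound hbs, hab⟩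

lemma reaches_cond {a b : V} (h : H.Reaches a b) :
    H.cond.Reaches (Quotient.mk H.sccSetoid a) (Quotient.mk H.sccSetoid b) := by
  induction h with
  | refl => exact Relation.ReflTransGen.refl
  | tail _ hcd ih =>
    rename_i c d _
    by_cases hq : Quotient.mk H.sccSetoid c = Quotient.mk H.sccSetoid d
    · rwa [hq] at ih
    · exact ih.tail ⟨hq, _, _, rfl, rfl, hcd⟩

lemma reaches_of_cond {X Y : Quotient H.sccSetoid} (h : H.cond.Reaches X Y) :
    ∀ a b, Quotient.mk H.sccSetoid a = X → Quotient.mk H.sccSetoid b = Y →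
      H.Reaches a b := by
  induction h with
  | refl =>
    intro a b ha hb
    exact (Quotient.exact (ha.trans hb.symm)).1
  | tail _ hZY ih =>
    rename_i Z Y' _
    obtain ⟨-, c, d, hc, hd, hcd⟩ := hZY
    intro a b ha hb
    have h1 : H.Reaches a c := ih a c ha hc
    have h2 : H.Reaches d b := (Quotient.exact (hd.trans hb.symm)).1
    exact (h1.tail hcd).trans h2

end Digraph
/-! ### The star graph is a tree -/

/-- The star `K_{1,n}` with center `0`. -/
def starGraph (n : ℕ) : SimpleGraph (Fin (n + 1)) where
  Adj i j := i ≠ j ∧ (i = 0 ∨ j = 0)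
  symm := ⟨by rintro i j ⟨h1, h2⟩; exact ⟨h1.symm, h2.symm⟩⟩
  loopless := ⟨by rintro i ⟨h1, -⟩; exact h1 rfl⟩

lemma starGraph_edge_from {n : ℕ} {u y : Fin (n + 1)} (W : (starGraph n).Walk u y)
    (huy : u ≠ y) (hu : u ≠ 0) : s(u, (0 : Fin (n + 1))) ∈ W.edges := by
  cases W with
  | nil => exact absurd rfl huy
  | cons h p =>
    rename_i w
    have hw : w = 0 := h.1 |> fun _ => by
      rcases h.2 with h0 | h0
      · exact absurd h0 hu
      · exact h0
    subst hw
    simp [SimpleGraph.Walk.edges_cons]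

lemma starGraph_isTree (n : ℕ) : (starGraph n).IsTree := by
  constructor
  · -- connected
    refine ⟨fun u v => ?_⟩
    have key : ∀ w : Fin (n + 1), (starGraph n).Reachable w 0 := by
      intro w
      by_cases hw : w = 0
      · rw [hw]
      · exact SimpleGraph.Adj.reachable ⟨hw, Or.inr rfl⟩
    exact (key u).trans (key v).symm
  · -- acyclic
    intro v c hc
    classical
    -- find a vertex of the cycle different from 0
    have hmain : ∀ (u : Fin (n + 1)), u ≠ 0 → ∀ (c' : (starGraph n).Walk u u),
        ¬ c'.IsCycle := by
      intro u hu c' hc'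
      cases c' with
      | nil => exact hc'.ne_nil rfl
      | cons h p =>
        rename_i w
        have hw : w = 0 := by
          rcases h.2 with h0 | h0
          · exact absurd h0 hu
          · exact h0
        subst hw
        have hne : (0 : Fin (n + 1)) ≠ u := fun h0 => hu h0.symm
        have hmem : s(u, (0 : Fin (n + 1))) ∈ p.reverse.edges :=
          starGraph_edge_from p.reverse (fun h0 => hu h0) hu
        rw [SimpleGraph.Walk.edges_reverse, List.mem_reverse] at hmem
        have htrail := hc'.isTrail.edges_nodup
        rw [SimpleGraph.Walk.edges_cons, List.nodup_cons] at htrail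
        exact htrail.1 hmem
    by_cases hv : v = 0
    · subst hv
      cases c with
      | nil => exact hc.ne_nil rfl
      | cons h p =>
        rename_i w
        have hw : w ≠ 0 := fun h0 => h.1 ((h0.symm : (0:Fin (n+1)) = w).symm ▸ rfl)
        have hwsup : w ∈ (SimpleGraph.Walk.cons h p).support := by
          simp [SimpleGraph.Walk.support_cons, SimpleGraph.Walk.start_mem_support]
        exact hmain w hw _ (hc.rotate hwsup)
    · exact hmain v hv c hc
/-! ### Finsum and hypergraph auxiliary lemmas -/

lemma finsum_mem_eq_finset_sum' {α : Type} (f : α → ℝ) (s : Set α) (t : Finset α)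
    (h : s = ↑t) : (∑ᶠ i ∈ s, f i) = ∑ i ∈ t, f i := by
  rw [h, finsum_mem_coe_finset]

namespace HGraph

variable {V : Type}

lemma coverWeight_nonneg (H : HGraph V) {γ : Set V → ℝ} (h : ∀ e, 0 ≤ γ e) :
    0 ≤ H.coverWeight γ :=
  finsum_nonneg fun e => finsum_nonneg fun _ => h e

lemma bddBelow_coverSet (H : HGraph V) (X : Set V) :
    BddBelow {w | ∃ γ : Set V → ℝ, H.IsFracEdgeCover X γ ∧ H.coverWeight γ = w} := by
  refine ⟨0, ?_⟩
  rintro w ⟨γ, ⟨h0, -, -⟩, rfl⟩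
  exact H.coverWeight_nonneg h0

lemma fracCoverOf_nonneg (H : HGraph V) (X : Set V) : 0 ≤ H.fracCoverOf X := by
  refine Real.sInf_nonneg ?_
  rintro w ⟨γ, ⟨h0, -, -⟩, rfl⟩
  exact H.coverWeight_nonneg h0

end HGraph

namespace Digraph

variable {V : Type} (H : Digraph V)

/-- The hyperedge of the reachability hypergraph associated with a source component. -/
def srcF (X : Quotient H.sccSetoid) : Set V := H.reachSet X.out

lemma srcF_mk (s : V) : H.srcF (Quotient.mk H.sccSetoid s) = H.reachSet s :=
  H.reachSet_congr (Quotient.exact (Quotient.out_eq _))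

lemma out_inSourceComp {X : Quotient H.sccSetoid} (hX : H.cond.IsSrc X) :
    H.InSourceComp X.out :=
  (H.inSourceComp_iff_isSrc).2 (by rwa [Quotient.out_eq])

lemma srcF_mem_edges {X : Quotient H.sccSetoid} (hX : H.cond.IsSrc X) :
    H.srcF X ∈ H.reachHyp.edges :=
  ⟨X.out, H.out_inSourceComp hX, rfl⟩

lemma mem_srcF_iff {X : Quotient H.sccSetoid} {v : V} :
    v ∈ H.srcF X ↔ H.cond.Reaches X (Quotient.mk H.sccSetoid v) := by
  constructor
  · intro h
    have := H.reaches_cond h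
    rwa [Quotient.out_eq] at this
  · intro h
    exact H.reaches_of_cond h X.out v (Quotient.out_eq _) rfl

lemma srcF_inj {X Y : Quotient H.sccSetoid} (hX : H.cond.IsSrc X) (hY : H.cond.IsSrc Y)
    (h : H.srcF X = H.srcF Y) : X = Y := by
  have h1 : H.Reaches Y.out X.out := by
    have : X.out ∈ H.srcF Y := h ▸ (Relation.ReflTransGen.refl : X.out ∈ H.srcF X)
    exact this
  have h2 : H.Reaches X.out Y.out := H.out_inSourceComp hX Y.out h1
  rw [← Quotient.out_eq X, ← Quotient.out_eq Y]
  exact Quotient.sound ⟨h2, h1⟩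

lemma edges_eq_image : H.reachHyp.edges = H.srcF '' {X | H.cond.IsSrc X} := by
  ext e
  constructor
  · rintro ⟨s, hs, rfl⟩
    exact ⟨Quotient.mk H.sccSetoid s, (H.inSourceComp_iff_isSrc).1 hs, H.srcF_mk s⟩
  · rintro ⟨X, hX, rfl⟩
    exact H.srcF_mem_edges hX

lemma srcF_eq_of_inSourceComp {v : V} {X : Quotient H.sccSetoid}
    (hv : H.InSourceComp v) (hvX : v ∈ H.srcF X) : X = Quotient.mk H.sccSetoid v := by
  have h1 : H.Reaches X.out v := hvX
  have h2 : H.Reaches v X.out := hv X.out h1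
  rw [← Quotient.out_eq X]
  exact Quotient.sound ⟨h1, h2⟩

end Digraph
namespace Digraph

variable {V : Type} [Fintype V] (H : Digraph V)

lemma leaf_bound {X : Quotient H.sccSetoid} (hX : H.cond.IsSrc X) :
    H.reachHyp.fracCoverOf (H.srcF X) ≤ 1 := by
  classical
  set γ₁ : Set V → ℝ := fun e => if e = H.srcF X then 1 else 0 with hγ₁
  have hedge := H.srcF_mem_edges hX
  have hcov : H.reachHyp.IsFracEdgeCover (H.srcF X) γ₁ := by
    refine ⟨fun e => by simp only [hγ₁]; split <;> norm_num, fun e he => ?_, fun v hv => ?_⟩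
    · simp only [hγ₁]
      exact if_neg fun h : e = H.srcF X => he (by rw [h]; exact hedge)
    · have hfin : ({e ∈ H.reachHyp.edges | v ∈ e} : Set (Set V)).Finite := Set.toFinite _
      rw [finsum_mem_eq_finset_sum' γ₁ _ hfin.toFinset hfin.coe_toFinset.symm]
      have hmem : H.srcF X ∈ hfin.toFinset := by
        rw [Set.Finite.mem_toFinset]; exact ⟨hedge, hv⟩
      rw [hγ₁]
      rw [Finset.sum_ite_eq' hfin.toFinset (H.srcF X) (fun _ => (1:ℝ)), if_pos hmem]
  have hwt : H.reachHyp.coverWeight γ₁ = 1 := by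
    have hfin : (H.reachHyp.edges : Set (Set V)).Finite := Set.toFinite _
    rw [HGraph.coverWeight, finsum_mem_eq_finset_sum' γ₁ _ hfin.toFinset hfin.coe_toFinset.symm]
    rw [hγ₁, Finset.sum_ite_eq' hfin.toFinset (H.srcF X) (fun _ => (1:ℝ)),
      if_pos (Set.Finite.mem_toFinset hfin |>.2 hedge)]
  exact csInf_le (HGraph.bddBelow_coverSet _ _) ⟨γ₁, hcov, hwt⟩

lemma coverSet_nonempty [Nonempty V] :
    {w | ∃ ψ : Quotient H.sccSetoid → ℝ, H.cond.IsFracCover ψ ∧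
      (∑ᶠ s ∈ {s | H.cond.IsSrc s}, ψ s) = w}.Nonempty := by
  classical
  set ψ₀ : Quotient H.sccSetoid → ℝ := fun X => if H.cond.IsSrc X then 1 else 0 with hψ₀
  have hpos : ∀ X, 0 ≤ ψ₀ X := fun X => by simp only [hψ₀]; split <;> norm_num
  have hkey : ∀ X : Quotient H.sccSetoid,
      1 ≤ ∑ᶠ S ∈ {S | H.cond.IsSrc S ∧ X ∈ H.cond.reachSet S}, ψ₀ S := by
    intro X
    obtain ⟨s, hs, hsr⟩ := H.exists_source_reaches X.out
    have hsrc : H.cond.IsSrc (Quotient.mk H.sccSetoid s) :=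
      (H.inSourceComp_iff_isSrc).1 hs
    have hreach : H.cond.Reaches (Quotient.mk H.sccSetoid s) X := by
      have := H.reaches_cond hsr
      rwa [Quotient.out_eq] at this
    have hfin : ({S | H.cond.IsSrc S ∧ X ∈ H.cond.reachSet S} :
        Set (Quotient H.sccSetoid)).Finite := Set.toFinite _
    rw [finsum_mem_eq_finset_sum' ψ₀ _ hfin.toFinset hfin.coe_toFinset.symm]
    have hmem : Quotient.mk H.sccSetoid s ∈ hfin.toFinset := by
      rw [Set.Finite.mem_toFinset]; exact ⟨hsrc, hreach⟩
    calc (1:ℝ) = ψ₀ (Quotient.mk H.sccSetoid s) := by simp [hψ₀, hsrc]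
    _ ≤ _ := Finset.single_le_sum (fun i _ => hpos i) hmem
  have htot : 1 ≤ ∑ᶠ S ∈ {S | H.cond.IsSrc S}, ψ₀ S := by
    obtain ⟨v⟩ := ‹Nonempty V›
    obtain ⟨s, hs, -⟩ := H.exists_source_reaches v
    have hsrc : H.cond.IsSrc (Quotient.mk H.sccSetoid s) :=
      (H.inSourceComp_iff_isSrc).1 hs
    have hfin : ({S | H.cond.IsSrc S} : Set (Quotient H.sccSetoid)).Finite :=
      Set.toFinite _
    rw [finsum_mem_eq_finset_sum' ψ₀ _ hfin.toFinset hfin.coe_toFinset.symm]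
    have hmem : Quotient.mk H.sccSetoid s ∈ hfin.toFinset := by
      rw [Set.Finite.mem_toFinset]; exact hsrc
    calc (1:ℝ) = ψ₀ (Quotient.mk H.sccSetoid s) := by simp [hψ₀, hsrc]
    _ ≤ _ := Finset.single_le_sum (fun i _ => hpos i) hmem
  exact ⟨_, ψ₀, ⟨hpos, fun S hS => if_neg hS, fun v _ => hkey v, htot⟩, rfl⟩

lemma center_bound {w : ℝ} (ψ : Quotient H.sccSetoid → ℝ)
    (hψ : H.cond.IsFracCover ψ) (hw : (∑ᶠ s ∈ {s | H.cond.IsSrc s}, ψ s) = w) :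
    H.reachHyp.fracCoverOf {v | ¬ H.InSourceComp v} ≤ w := by
  classical
  haveI : Fintype (Quotient H.sccSetoid) := Fintype.ofFinite _
  set SC : Set (Quotient H.sccSetoid) := {X | H.cond.IsSrc X} with hSC
  have hSCfin : SC.Finite := Set.toFinite _
  set TSC : Finset (Quotient H.sccSetoid) := hSCfin.toFinset with hTSC
  have hmemT : ∀ X, X ∈ TSC ↔ H.cond.IsSrc X := fun X => Set.Finite.mem_toFinset _
  set γ : Set V → ℝ := fun e => ∑ X ∈ TSC.filter (fun X => H.srcF X = e), ψ X with hγ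
  have hψ0 := hψ.1
  -- fibers are singletons
  have hfiber : ∀ X ∈ TSC, TSC.filter (fun Y => H.srcF Y = H.srcF X) = {X} := by
    intro X hX
    ext Y
    simp only [Finset.mem_filter, Finset.mem_singleton]
    constructor
    · rintro ⟨hY, hFY⟩
      exact H.srcF_inj ((hmemT Y).1 hY) ((hmemT X).1 hX) hFY
    · rintro rfl
      exact ⟨hX, rfl⟩
  have hγF : ∀ X ∈ TSC, γ (H.srcF X) = ψ X := by
    intro X hX
    rw [hγ]
    simp only
    rw [hfiber X hX, Finset.sum_singleton]
  have hinj : ∀ X ∈ TSC, ∀ Y ∈ TSC, H.srcF X = H.srcF Y → X = Y := fun X hX Y hY h =>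
    H.srcF_inj ((hmemT X).1 hX) ((hmemT Y).1 hY) h
  -- description of the edge set
  have hedges : H.reachHyp.edges = ↑(TSC.image H.srcF) := by
    rw [H.edges_eq_image]
    rw [Finset.coe_image, Set.Finite.coe_toFinset]
  have hcov : H.reachHyp.IsFracEdgeCover {v | ¬ H.InSourceComp v} γ := by
    refine ⟨fun e => Finset.sum_nonneg fun X _ => hψ0 X, fun e he => ?_, fun v hv => ?_⟩
    · refine Finset.sum_eq_zero fun X hX => ?_
      rw [Finset.mem_filter] at hX
      exact absurd (hX.2 ▸ H.srcF_mem_edges ((hmemT X).1 hX.1)) he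
    · -- cover condition for a non-source vertex
      have hnsrc : ¬ H.cond.IsSrc (Quotient.mk H.sccSetoid v) :=
        fun h => hv ((H.inSourceComp_iff_isSrc).2 h)
      have h1 := hψ.2.2.1 (Quotient.mk H.sccSetoid v) hnsrc
      set Tv : Finset (Quotient H.sccSetoid) := TSC.filter (fun X => v ∈ H.srcF X) with hTv
      have hset1 : {S | H.cond.IsSrc S ∧ (Quotient.mk H.sccSetoid v) ∈ H.cond.reachSet S}
          = ↑Tv := by
        ext X
        simp only [hTv, Finset.coe_filter, Set.mem_setOf_eq, hmemT]
        exact and_congr_right fun _ => (H.mem_srcF_iff).symm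
      rw [finsum_mem_eq_finset_sum' ψ _ Tv hset1] at h1
      have hset2 : {e ∈ H.reachHyp.edges | v ∈ e} = ↑(Tv.image H.srcF) := by
        ext e
        simp only [Set.mem_setOf_eq, Finset.coe_image, Set.mem_image, Finset.mem_coe,
          hTv, Finset.mem_filter]
        constructor
        · rintro ⟨he, hve⟩
          rw [H.edges_eq_image] at he
          obtain ⟨X, hX, rfl⟩ := he
          exact ⟨X, ⟨(hmemT X).2 hX, hve⟩, rfl⟩
        · rintro ⟨X, ⟨hX, hvX⟩, rfl⟩
          exact ⟨H.srcF_mem_edges ((hmemT X).1 hX), hvX⟩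
      rw [finsum_mem_eq_finset_sum' γ _ (Tv.image H.srcF) hset2]
      rw [Finset.sum_image (fun X hX Y hY h => hinj X (Finset.mem_of_mem_filter X hX) Y
        (Finset.mem_of_mem_filter Y hY) h)]
      calc (1:ℝ) ≤ ∑ X ∈ Tv, ψ X := h1
      _ = ∑ X ∈ Tv, γ (H.srcF X) :=
          Finset.sum_congr rfl fun X hX => (hγF X (Finset.mem_of_mem_filter X hX)).symm
  have hwt : H.reachHyp.coverWeight γ = w := by
    rw [HGraph.coverWeight, finsum_mem_eq_finset_sum' γ _ (TSC.image H.srcF) hedges]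
    rw [hγ]
    simp only
    have hfw : ∑ x ∈ TSC.image H.srcF, ∑ X ∈ TSC.filter (fun X => H.srcF X = x), ψ X
        = ∑ X ∈ TSC, ψ X :=
      Finset.sum_fiberwise_of_maps_to (fun X hX => Finset.mem_image_of_mem _ hX) ψ
    rw [hfw]
    rw [← hw, finsum_mem_eq_finset_sum' ψ _ TSC (Set.Finite.coe_toFinset _).symm]
  exact csInf_le (HGraph.bddBelow_coverSet _ _) ⟨γ, hcov, hwt⟩

end Digraph
theorem stmt11 {V : Type} [Fintype V] (H : Digraph V) :
    H.reachHyp.fhtw ≤ H.fracCoverNum := by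
  classical
  rcases isEmpty_or_nonempty V with hV | hV
  · -- the empty digraph
    haveI : IsEmpty (Quotient H.sccSetoid) :=
      ⟨fun X => isEmptyElim X.out⟩
    have hS2 : {w | ∃ ψ : Quotient H.sccSetoid → ℝ, H.cond.IsFracCover ψ ∧
        (∑ᶠ s ∈ {s | H.cond.IsSrc s}, ψ s) = w} = ∅ := by
      ext w
      simp only [Set.mem_setOf_eq, Set.mem_empty_iff_false, iff_false]
      rintro ⟨ψ, ⟨-, -, -, h1⟩, -⟩
      have he : ({s | H.cond.IsSrc s} : Set (Quotient H.sccSetoid)) = ∅ :=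
        Set.eq_empty_of_isEmpty _
      rw [he, finsum_mem_empty] at h1
      linarith
    have hr : H.fracCoverNum = 0 := by
      rw [Digraph.fracCoverNum, Digraph.dagFracCoverNum, hS2, Real.sInf_empty]
    rw [hr]
    let td : H.reachHyp.TreeDecomp := {
      n := 1
      tree := ⊥
      isTree := ⟨⟨fun u v => by rw [Subsingleton.elim u v]⟩, SimpleGraph.isAcyclic_bot⟩
      bag := fun _ => ∅
      bag_subset := fun t => Set.empty_subset _
      verts_covered := fun v _ => isEmptyElim v
      edges_covered := by rintro e ⟨s, -, -⟩; exact isEmptyElim s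
      bags_connected := fun v => isEmptyElim v }
    have h1 : H.reachHyp.fhtw ≤ ⨆ t, H.reachHyp.fracCoverOf (td.bag t) := by
      refine csInf_le ⟨0, ?_⟩ ⟨td, rfl⟩
      rintro w ⟨td', rfl⟩
      exact Real.iSup_nonneg fun t => HGraph.fracCoverOf_nonneg _ _
    refine h1.trans ?_
    have h2 : (⨆ t, H.reachHyp.fracCoverOf (td.bag t))
        = H.reachHyp.fracCoverOf ∅ := by
      have hb : ∀ t : Fin 1, td.bag t = (∅ : Set V) := fun _ => rfl
      simp only [hb]
      exact ciSup_const
    rw [h2]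
    refine csInf_le (HGraph.bddBelow_coverSet _ _) ⟨fun _ => 0, ⟨fun e => le_refl 0,
      fun e _ => rfl, fun v hv => absurd hv (Set.notMem_empty v)⟩, ?_⟩
    simp [HGraph.coverWeight]
  · -- the nonempty case
    haveI : Fintype (Quotient H.sccSetoid) := Fintype.ofFinite _
    have hSCfin : ({X | H.cond.IsSrc X} : Set (Quotient H.sccSetoid)).Finite :=
      Set.toFinite _
    haveI : Fintype ↥({X | H.cond.IsSrc X} : Set (Quotient H.sccSetoid)) :=
      hSCfin.fintype
    set SC : Set (Quotient H.sccSetoid) := {X | H.cond.IsSrc X} with hSCdef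
    set k := Fintype.card ↥SC with hk
    set eqv : ↥SC ≃ Fin k := Fintype.equivFin ↥SC with heqv
    set C : Set V := {v | ¬ H.InSourceComp v} with hCdef
    set bag : Fin (k+1) → Set V :=
      fun t => if h : t = 0 then C else H.srcF (eqv.symm (t.pred h)).1 with hbag
    have hbag0 : bag 0 = C := by simp [hbag]
    have hbagS : ∀ (i : Fin k), bag i.succ = H.srcF (eqv.symm i).1 := by
      intro i
      simp [hbag, Fin.succ_ne_zero, Fin.pred_succ]
    have hsrcmem : ∀ v, H.InSourceComp v → Quotient.mk H.sccSetoid v ∈ SC :=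
      fun v hv => (H.inSourceComp_iff_isSrc).1 hv
    have hvmem : ∀ v : V, v ∈ H.srcF (Quotient.mk H.sccSetoid v) := by
      intro v
      rw [H.srcF_mk]
      exact Relation.ReflTransGen.refl
    have huniq : ∀ v, H.InSourceComp v → ∀ (t : Fin (k+1)), v ∈ bag t →
        ∃ (hne : t ≠ 0), (eqv.symm (t.pred hne)).1 = Quotient.mk H.sccSetoid v := by
      intro v hv t h
      by_cases ht : t = 0
      · subst ht
        rw [hbag0] at h
        exact absurd hv h
      · refine ⟨ht, ?_⟩
        simp only [hbag, dif_neg ht] at h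
        exact H.srcF_eq_of_inSourceComp hv h
    let td : H.reachHyp.TreeDecomp := {
      n := k + 1
      tree := starGraph k
      isTree := starGraph_isTree k
      bag := bag
      bag_subset := fun t => Set.subset_univ _
      verts_covered := by
        intro v _
        by_cases hv : H.InSourceComp v
        · refine ⟨(eqv ⟨_, hsrcmem v hv⟩).succ, ?_⟩
          rw [hbagS, Equiv.symm_apply_apply]
          exact hvmem v
        · exact ⟨0, by rw [hbag0]; exact hv⟩
      edges_covered := by
        rintro e ⟨s, hs, rfl⟩
        refine ⟨(eqv ⟨_, hsrcmem s hs⟩).succ, ?_⟩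
        rw [hbagS, Equiv.symm_apply_apply, H.srcF_mk]
      bags_connected := by
        intro v t₁ t₂ h₁ h₂
        by_cases hv : H.InSourceComp v
        · obtain ⟨hn1, hq1⟩ := huniq v hv t₁ h₁
          obtain ⟨hn2, hq2⟩ := huniq v hv t₂ h₂
          have h4 : t₁.pred hn1 = t₂.pred hn2 :=
            eqv.symm.injective (Subtype.ext (hq1.trans hq2.symm))
          have h5 : t₁ = t₂ := by
            rw [← Fin.succ_pred t₁ hn1, ← Fin.succ_pred t₂ hn2, h4]
          subst h5
          exact SimpleGraph.Reachable.refl _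
        · have h0 : v ∈ bag 0 := by rw [hbag0]; exact hv
          have key : ∀ (t : Fin (k+1)) (h : v ∈ bag t),
              ((starGraph k).induce {t | v ∈ bag t}).Reachable ⟨t, h⟩ ⟨0, h0⟩ := by
            intro t h
            by_cases ht : t = 0
            · subst ht
              exact SimpleGraph.Reachable.refl _
            · exact SimpleGraph.Adj.reachable ⟨ht, Or.inr rfl⟩
          exact (key t₁ h₁).trans (key t₂ h₂).symm }
    have h1 : H.reachHyp.fhtw ≤ ⨆ t, H.reachHyp.fracCoverOf (td.bag t) := by
      refine csInf_le ⟨0, ?_⟩ ⟨td, rfl⟩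
      rintro w ⟨td', rfl⟩
      exact Real.iSup_nonneg fun t => HGraph.fracCoverOf_nonneg _ _
    refine h1.trans ?_
    have hne := H.coverSet_nonempty
    have hρ1 : (1:ℝ) ≤ H.fracCoverNum := by
      rw [Digraph.fracCoverNum, Digraph.dagFracCoverNum]
      refine le_csInf hne ?_
      rintro w ⟨ψ, hψ, rfl⟩
      exact hψ.2.2.2
    refine ciSup_le fun t => ?_
    by_cases ht : t = 0
    · subst ht
      have hb : td.bag 0 = C := hbag0
      rw [hb]
      rw [Digraph.fracCoverNum, Digraph.dagFracCoverNum]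
      refine le_csInf hne ?_
      rintro w ⟨ψ, hψ, hw⟩
      exact H.center_bound ψ hψ hw
    · have hb : td.bag t = H.srcF (eqv.symm (t.pred ht)).1 := by
        show bag t = _
        simp only [hbag, dif_neg ht]
      rw [hb]
      exact (H.leaf_bound (eqv.symm (t.pred ht)).2).trans hρ1

end
end

section
/- Every digraph H satisfies α(Γ(H/∼)) = img(H), that is, the independence number of the contour of the condensation of H equals the maximum size of an induced matching gadget of the condensation of H. -/
noncomputable section

open Digraph in
lemma key {A : Type} [Fintype A] (D : Digraph A) (n : ℕ) :
    (∃ I : Set A, D.dagContour.IsIndepSet I ∧ I.ncard = n) ↔ HasIMG D n := by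
  classical
  constructor
  · rintro ⟨I, ⟨hIv, hind⟩, rfl⟩
    have hfin : I.Finite := Set.toFinite I
    have hcard : Nat.card I = I.ncard := Nat.card_coe_set_eq I
    obtain ⟨e⟩ : Nonempty (Fin I.ncard ≃ I) :=
      ⟨(Fintype.equivFinOfCardEq (by rw [← Nat.card_eq_fintype_card, hcard])).symm⟩
    set w : Fin I.ncard → A := fun i => (e i : A) with hw
    have hmem : ∀ i, w i ∈ I := fun i => (e i).2
    have hns : ∀ i, ¬ D.IsSrc (w i) := fun i => hIv (hmem i)
    have hs : ∀ i, ∃ u, D.Adj u (w i) := by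
      intro i
      by_contra h
      push_neg at h
      exact hns i h
    choose s hsadj using hs
    refine ⟨s, w, hsadj, ?_, ?_⟩
    · intro i j hij
      have : e i = e j := Subtype.ext hij
      exact e.injective this
    · intro x hx i j hi hj
      by_contra hij
      have hne : w i ≠ w j := fun h => hij (e.injective (Subtype.ext h))
      have hedge : (D.reachSet x \ {v | D.IsSrc v}) ∈ D.dagContour.edges := by
        refine ⟨⟨x, hx, rfl⟩, ⟨w i, hi, hns i⟩⟩
      exact hind _ (hmem i) _ (hmem j) hne _ hedge ⟨⟨hi, hns i⟩, ⟨hj, hns j⟩⟩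
  · rintro ⟨s, w, hadj, hinj, hsrc⟩
    refine ⟨Set.range w, ⟨?_, ?_⟩, ?_⟩
    · rintro v ⟨i, rfl⟩
      intro h
      exact h (s i) (hadj i)
    · rintro u ⟨i, rfl⟩ v ⟨j, rfl⟩ hne e ⟨⟨x, hx, rfl⟩, -⟩ ⟨hu, hv⟩
      exact hne (congrArg w (hsrc x hx i j hu.1 hv.1))
    · rw [Set.ncard_eq_toFinset_card', Set.toFinset_range, Finset.card_image_of_injective _ hinj,
        Finset.card_univ, Fintype.card_fin]


theorem stmt14 {V : Type} [Fintype V] (H : Digraph V) :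
    H.cond.dagContour.indepNum = imgNum H.cond := by
  haveI : Fintype (Quotient H.sccSetoid) := Fintype.ofFinite _
  unfold HGraph.indepNum imgNum
  congr 1
  ext n
  exact key H.cond n

end
end

section
/- For every digraph H there exists a digraph F such that: (1) F can be obtained from H by a finite sequence of sink deletions; (2) α*(Γ(F)) ≥ α*(Γ(H)); and (3) the condensation F/∼ is a canonical DAG. -/
noncomputable section

/-! ### Auxiliary lemmas for Statement 17 -/

namespace Stmt17Aux

open Set

lemma fsum_eq_finset {W : Type} [Finite W] (S : Set W) (f : W → ℝ) :
    ∑ᶠ v ∈ S, f v = ∑ v ∈ S.toFinite.toFinset, f v := by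
  conv_lhs => rw [← Set.Finite.coe_toFinset S.toFinite]
  exact finsum_mem_coe_finset _ _

lemma fsum_nonneg {W : Type} [Finite W] {S : Set W} {f : W → ℝ} (h : ∀ v, 0 ≤ f v) :
    0 ≤ ∑ᶠ v ∈ S, f v := by
  rw [fsum_eq_finset]; exact Finset.sum_nonneg fun i _ => h i

lemma fsum_mono {W : Type} [Finite W] {S₁ S₂ : Set W} {f : W → ℝ}
    (h0 : ∀ v, 0 ≤ f v) (h : S₁ ⊆ S₂) :
    ∑ᶠ v ∈ S₁, f v ≤ ∑ᶠ v ∈ S₂, f v := by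
  rw [fsum_eq_finset, fsum_eq_finset]
  refine Finset.sum_le_sum_of_subset_of_nonneg ?_ fun i _ _ => h0 i
  intro x hx
  simp only [Set.Finite.mem_toFinset] at hx ⊢
  exact h hx

lemma zero_isFracIndep {W : Type} (Hy : HGraph W) : Hy.IsFracIndep (fun _ => 0) := by
  refine ⟨fun v => ⟨le_rfl, zero_le_one⟩, fun v _ => rfl, fun e he => ?_⟩
  rw [finsum_mem_zero]; exact zero_le_one

lemma weight_zero {W : Type} (Hy : HGraph W) : Hy.weight (fun _ => 0) = 0 := by
  rw [HGraph.weight]; exact finsum_mem_zero _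

lemma weight_bddAbove {W : Type} [Finite W] (Hy : HGraph W) :
    BddAbove {w | ∃ μ : W → ℝ, Hy.IsFracIndep μ ∧ Hy.weight μ = w} := by
  refine ⟨(Hy.verts.toFinite.toFinset.card : ℝ), ?_⟩
  rintro w ⟨μ, hμ, rfl⟩
  rw [HGraph.weight, fsum_eq_finset]
  calc ∑ v ∈ Hy.verts.toFinite.toFinset, μ v
      ≤ ∑ _v ∈ Hy.verts.toFinite.toFinset, (1:ℝ) :=
        Finset.sum_le_sum fun i _ => (hμ.1 i).2
    _ = _ := by simp

section DigraphFinite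

variable {V : Type} [Finite V]

lemma exists_sink_above (H : Digraph V) (v : V) :
    ∃ t, H.Reaches v t ∧ H.IsSinkVert t := by
  let r : V → V → Prop := fun a b => H.Reaches b a ∧ ¬ H.Reaches a b
  haveI : IsTrans V r := ⟨fun a b c hab hbc =>
    ⟨hbc.1.trans hab.1, fun h => hab.2 (h.trans hbc.1)⟩⟩
  haveI : IsIrrefl V r := ⟨fun a ha => ha.2 ha.1⟩
  obtain ⟨t, htv, hmin⟩ := (Finite.wellFounded_of_trans_of_irrefl r).has_min
    (H.reachSet v) ⟨v, Relation.ReflTransGen.refl⟩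
  refine ⟨t, htv, fun w hw => ?_⟩
  by_contra hwt
  exact hmin w (Relation.ReflTransGen.trans htv hw) ⟨hw, hwt⟩

lemma exists_source_below (H : Digraph V) (v : V) :
    ∃ s, H.InSourceComp s ∧ H.Reaches s v := by
  let r : V → V → Prop := fun a b => H.Reaches a b ∧ ¬ H.Reaches b a
  haveI : IsTrans V r := ⟨fun a b c hab hbc =>
    ⟨hab.1.trans hbc.1, fun h => hab.2 (hbc.1.trans h)⟩⟩
  haveI : IsIrrefl V r := ⟨fun a ha => ha.2 ha.1⟩
  obtain ⟨s, hsv, hmin⟩ := (Finite.wellFounded_of_trans_of_irrefl r).has_min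
    {u | H.Reaches u v} ⟨v, Relation.ReflTransGen.refl⟩
  refine ⟨s, fun u hus => ?_, hsv⟩
  by_contra hsu
  exact hmin u (Relation.ReflTransGen.trans hus hsv) ⟨hus, hsu⟩

end DigraphFinite

section Cond

variable {V : Type}

lemma cond_reaches (H : Digraph V) {X Y : Quotient H.sccSetoid}
    (h : H.cond.Reaches X Y) :
    ∀ a b, Quotient.mk H.sccSetoid a = X → Quotient.mk H.sccSetoid b = Y →
      H.Reaches a b := by
  have h' : Relation.ReflTransGen H.cond.Adj X Y := h
  clear h
  induction h' with
  | refl => exact fun a b ha hb => (Quotient.exact (ha.trans hb.symm)).1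
  | tail h1 h2 ih =>
    intro a b ha hb
    obtain ⟨hne, c, d, hc, hd, hcd⟩ := h2
    exact ((ih a c ha hc).trans (Relation.ReflTransGen.single hcd)).trans
      (Quotient.exact (hd.trans hb.symm)).1

lemma cond_acyclic (H : Digraph V) : H.cond.IsAcyclic := by
  rintro X Y ⟨hne, a, b, ha, hb, hab⟩ hYX
  apply hne
  have h1 : H.Reaches b a := cond_reaches H hYX b a hb ha
  have h2 : H.Reaches a b := Relation.ReflTransGen.single hab
  rw [← ha, ← hb]
  exact Quotient.sound ⟨h2, h1⟩

lemma canonical_of_all (H : Digraph V)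
    (h : ∀ v, H.InSourceComp v ∨ H.IsSinkVert v) :
    H.cond.IsCanonicalDAG := by
  refine ⟨cond_acyclic H, ?_⟩
  intro X
  obtain ⟨v, rfl⟩ := X.exists_rep
  rcases h v with hv | hv
  · left
    rintro Y ⟨hne, a, b, ha, hb, hab⟩
    have hbv : H.Reaches b v ∧ H.Reaches v b := Quotient.exact hb
    have hav : H.Reaches a v := (Relation.ReflTransGen.single hab).trans hbv.1
    have hva : H.Reaches v a := hv a hav
    exact hne (by rw [← ha]; exact Quotient.sound ⟨hav, hva⟩)
  · right
    rintro Y ⟨hne, a, b, ha, hb, hab⟩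
    have hva : H.Reaches v a := (Quotient.exact ha).2
    have hvb : H.Reaches v b := hva.trans (Relation.ReflTransGen.single hab)
    have hbv : H.Reaches b v := hv b hvb
    exact hne (by rw [← hb]; exact Quotient.sound ⟨hvb, hbv⟩)

end Cond

section SinkDel

variable {V : Type}

lemma sinkDelete_reaches_proj (H : Digraph V) (t : V)
    {a b : {v : V // ¬ (H.Reaches v t ∧ H.Reaches t v)}}
    (h : (H.sinkDelete t).Reaches a b) : H.Reaches a.1 b.1 := by
  have h' : Relation.ReflTransGen (H.sinkDelete t).Adj a b := h
  clear h
  induction h' with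
  | refl => exact Relation.ReflTransGen.refl
  | tail h1 h2 ih =>
    rename_i c
    exact Relation.ReflTransGen.tail ih (show H.Adj _ c.1 from h2)

lemma sinkDelete_reaches_lift (H : Digraph V) (t : V) (ht : H.IsSinkVert t)
    {x y : V} (h : H.Reaches x y)
    (hx : ¬ (H.Reaches x t ∧ H.Reaches t x))
    (hy : ¬ (H.Reaches y t ∧ H.Reaches t y)) :
    (H.sinkDelete t).Reaches ⟨x, hx⟩ ⟨y, hy⟩ := by
  have h' : Relation.ReflTransGen H.Adj x y := h
  clear h
  revert hx
  induction h' using Relation.ReflTransGen.head_induction_on with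
  | refl => intro hx; exact Relation.ReflTransGen.refl
  | head h1 h2 ih =>
    intro hx
    rename_i a c
    have hc : ¬ (H.Reaches c t ∧ H.Reaches t c) := by
      rintro ⟨hct, htc⟩
      exact hy ⟨ht y (htc.trans h2), htc.trans h2⟩
    exact Relation.ReflTransGen.head
      (show (H.sinkDelete t).Adj ⟨a, hx⟩ ⟨c, hc⟩ from h1) (ih hc)

lemma sinkDelete_inSourceComp (H : Digraph V) (t : V) (ht : H.IsSinkVert t)
    (a : {v : V // ¬ (H.Reaches v t ∧ H.Reaches t v)}) :
    (H.sinkDelete t).InSourceComp a ↔ H.InSourceComp a.1 := by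
  constructor
  · intro h u hua
    have hu : ¬ (H.Reaches u t ∧ H.Reaches t u) := by
      rintro ⟨hut, htu⟩
      exact a.2 ⟨ht a.1 (htu.trans hua), htu.trans hua⟩
    have h2 := h ⟨u, hu⟩ (sinkDelete_reaches_lift H t ht hua hu a.2)
    exact sinkDelete_reaches_proj H t h2
  · intro h u hua
    exact sinkDelete_reaches_lift H t ht
      (h u.1 (sinkDelete_reaches_proj H t hua)) a.2 u.2

lemma sinkDelete_reachSet (H : Digraph V) (t : V) (ht : H.IsSinkVert t)
    (s : {v : V // ¬ (H.Reaches v t ∧ H.Reaches t v)}) :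
    (H.sinkDelete t).reachSet s = Subtype.val ⁻¹' H.reachSet s.1 := by
  ext a
  exact ⟨fun h => sinkDelete_reaches_proj H t h,
    fun h => sinkDelete_reaches_lift H t ht h s.2 a.2⟩

lemma contour_le_sinkDelete [Finite V] (H : Digraph V) (t m : V)
    (ht : H.IsSinkVert t) (hmt : H.Reaches m t) (htm : ¬ H.Reaches t m)
    (hm : ¬ H.InSourceComp m) :
    H.contour.fracIndepNum ≤ (H.sinkDelete t).contour.fracIndepNum := by
  classical
  set F := H.sinkDelete t with hFdef
  set T : Set V := {v | H.Reaches v t ∧ H.Reaches t v} with hTdef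
  have hmT : m ∉ T := fun h => htm h.2
  have hreachT : ∀ u ∈ T, H.Reaches m u := fun u hu => hmt.trans hu.2
  have hTnonsrc : ∀ u ∈ T, ¬ H.InSourceComp u := fun u hu hsrc =>
    htm (hu.2.trans (hsrc m (hreachT u hu)))
  show sSup {w | ∃ μ : V → ℝ, H.contour.IsFracIndep μ ∧ H.contour.weight μ = w}
    ≤ F.contour.fracIndepNum
  refine csSup_le ⟨0, fun _ => 0, zero_isFracIndep _, weight_zero _⟩ ?_
  rintro w ⟨μ, ⟨hμ01, hμ0, hμe⟩, rfl⟩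
  set Ssum : ℝ := ∑ᶠ u ∈ T, μ u with hS
  have hμnn : ∀ v, 0 ≤ μ v := fun v => (hμ01 v).1
  have hSnn : 0 ≤ Ssum := fsum_nonneg hμnn
  set ν : V → ℝ := fun v => if v ∈ T then 0 else if v = m then μ m + Ssum else μ v
    with hν
  have hνm : ν m = μ m + Ssum := by simp [hν, hmT]
  have hνT : ∀ v ∈ T, ν v = 0 := fun v hv => by simp [hν, hv]
  have hνo : ∀ v, v ∉ T → v ≠ m → ν v = μ v := fun v hv hvm => by
    simp [hν, hv, hvm]
  have hνnn : ∀ v, 0 ≤ ν v := by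
    intro v
    by_cases h1 : v ∈ T
    · rw [hνT v h1]
    · by_cases h2 : v = m
      · subst h2; rw [hνm]; exact add_nonneg (hμnn v) hSnn
      · rw [hνo v h1 h2]; exact hμnn v
  -- the key sum identity
  have key : ∀ e : Set V, T ⊆ e → m ∈ e →
      ∑ᶠ v ∈ e \ T, ν v = ∑ᶠ v ∈ e, μ v := by
    intro e hTe hme
    have hmem : m ∈ e \ T := ⟨hme, hmT⟩
    have h1 : e \ T = insert m ((e \ T) \ {m}) := by
      rw [Set.insert_diff_singleton, Set.insert_eq_of_mem hmem]
    have h2 : ∑ᶠ v ∈ e \ T, ν v = ν m + ∑ᶠ v ∈ (e \ T) \ {m}, ν v := by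
      conv_lhs => rw [h1]
      exact finsum_mem_insert _ (by simp) (Set.toFinite _)
    have h3 : ∑ᶠ v ∈ (e \ T) \ {m}, ν v = ∑ᶠ v ∈ (e \ T) \ {m}, μ v :=
      finsum_mem_congr rfl fun v hv => hνo v hv.1.2 (by simpa using hv.2)
    have h4 : ∑ᶠ v ∈ e \ T, μ v = μ m + ∑ᶠ v ∈ (e \ T) \ {m}, μ v := by
      conv_lhs => rw [h1]
      exact finsum_mem_insert _ (by simp) (Set.toFinite _)
    have h5 : ∑ᶠ v ∈ e, μ v = ∑ᶠ v ∈ e \ T, μ v + Ssum := by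
      rw [hS]
      conv_lhs => rw [← Set.diff_union_of_subset hTe]
      exact finsum_mem_union Set.disjoint_sdiff_left
        (Set.toFinite _) (Set.toFinite _)
    rw [h2, h3, h5, h4, hνm]
    ring
  -- upper bound for ν at m
  obtain ⟨s₀, hs₀, hs₀m⟩ := exists_source_below H m
  have hνm1 : μ m + Ssum ≤ 1 := by
    have hme₀ : m ∈ H.reachSet s₀ \ {v | H.InSourceComp v} := ⟨hs₀m, hm⟩
    have hTe₀ : T ⊆ H.reachSet s₀ \ {v | H.InSourceComp v} := fun u hu =>
      ⟨hs₀m.trans (hreachT u hu), hTnonsrc u hu⟩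
    have hedge : H.reachSet s₀ \ {v | H.InSourceComp v} ∈ H.contour.edges :=
      ⟨⟨s₀, hs₀, rfl⟩, ⟨m, hme₀⟩⟩
    have h6 : μ m + Ssum = ∑ᶠ v ∈ insert m T, μ v := by
      rw [finsum_mem_insert _ hmT (Set.toFinite _), hS]
    rw [h6]
    calc ∑ᶠ v ∈ insert m T, μ v
        ≤ ∑ᶠ v ∈ H.reachSet s₀ \ {v | H.InSourceComp v}, μ v :=
          fsum_mono hμnn (Set.insert_subset hme₀ hTe₀)
      _ ≤ 1 := hμe _ hedge
  have hν1 : ∀ v, ν v ≤ 1 := by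
    intro v
    by_cases h1 : v ∈ T
    · rw [hνT v h1]; exact zero_le_one
    · by_cases h2 : v = m
      · subst h2; rw [hνm]; exact hνm1
      · rw [hνo v h1 h2]; exact (hμ01 v).2
  -- transfer to the subtype
  have himg : ∀ X : Set V,
      Subtype.val '' ((Subtype.val ⁻¹' X :
        Set {v : V // ¬ (H.Reaches v t ∧ H.Reaches t v)})) = X \ T := by
    intro X
    ext v
    constructor
    · rintro ⟨a, ha, rfl⟩; exact ⟨ha, a.2⟩
    · rintro ⟨hv, hvT⟩; exact ⟨⟨v, hvT⟩, hv, rfl⟩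
  have hsum : ∀ (X : Set V) (f : V → ℝ),
      (∑ᶠ a ∈ ((Subtype.val ⁻¹' X) :
        Set {v : V // ¬ (H.Reaches v t ∧ H.Reaches t v)}), f a.1)
        = ∑ᶠ v ∈ X \ T, f v := by
    intro X f
    conv_rhs => rw [← himg X]
    exact (finsum_mem_image (Set.injOn_of_injective Subtype.val_injective)).symm
  have hverts : F.contour.verts = Subtype.val ⁻¹' H.contour.verts := by
    ext a
    exact not_congr (sinkDelete_inSourceComp H t ht a)
  refine le_csSup (weight_bddAbove _) ⟨fun a => ν a.1, ⟨?_, ?_, ?_⟩, ?_⟩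
  · exact fun a => ⟨hνnn a.1, hν1 a.1⟩
  · intro a ha
    rw [hverts] at ha
    have hsrc : H.InSourceComp a.1 := not_not.mp ha
    have h1 : a.1 ∉ T := a.2
    have h2 : a.1 ≠ m := fun h => hm (h ▸ hsrc)
    show ν a.1 = 0
    rw [hνo a.1 h1 h2]
    exact hμ0 a.1 (fun hc => hc hsrc)
  · rintro e' ⟨⟨s, hs, he'⟩, hne'⟩
    have hE : e' = Subtype.val ⁻¹' (H.reachSet s.1 \ {v | H.InSourceComp v}) := by
      rw [he', sinkDelete_reachSet H t ht s]
      ext a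
      simp only [Set.mem_diff, Set.mem_preimage, Set.mem_setOf_eq]
      exact and_congr Iff.rfl (not_congr (sinkDelete_inSourceComp H t ht a))
    have hs1 : H.InSourceComp s.1 := (sinkDelete_inSourceComp H t ht s).mp hs
    have hne2 : ((H.reachSet s.1 \ {v | H.InSourceComp v}) \ T).Nonempty := by
      obtain ⟨a, haa⟩ := hne'
      rw [hE] at haa
      exact ⟨a.1, haa, a.2⟩
    have hee : (H.reachSet s.1 \ {v | H.InSourceComp v}) ∈ H.contour.edges :=
      ⟨⟨s.1, hs1, rfl⟩, Set.Nonempty.mono Set.diff_subset hne2⟩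
    show (∑ᶠ a ∈ e', ν a.1) ≤ 1
    rw [hE, hsum]
    by_cases hme : m ∈ H.reachSet s.1 \ {v | H.InSourceComp v}
    · rw [key (H.reachSet s.1 \ {v | H.InSourceComp v})
        (fun u hu => ⟨hme.1.trans (hreachT u hu), hTnonsrc u hu⟩) hme]
      exact hμe _ hee
    · have hcg : ∑ᶠ v ∈ (H.reachSet s.1 \ {v | H.InSourceComp v}) \ T, ν v
          = ∑ᶠ v ∈ (H.reachSet s.1 \ {v | H.InSourceComp v}) \ T, μ v :=
        finsum_mem_congr rfl fun v hv => hνo v hv.2 (fun h => hme (h ▸ hv.1))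
      rw [hcg]
      exact le_trans (fsum_mono hμnn Set.diff_subset) (hμe _ hee)
  · show (∑ᶠ a ∈ F.contour.verts, ν a.1) = ∑ᶠ v ∈ H.contour.verts, μ v
    rw [hverts, hsum]
    exact key H.contour.verts (fun u hu => hTnonsrc u hu) hm

end SinkDel

end Stmt17Aux

theorem stmt17 {V : Type} [Fintype V] (H : Digraph V) :
    ∃ (B : Type) (F : Digraph B), SinkDelSeq H F ∧
      H.contour.fracIndepNum ≤ F.contour.fracIndepNum ∧
      F.cond.IsCanonicalDAG := by
  classical
  suffices h : ∀ (n : ℕ) (W : Type) [Fintype W] (G : Digraph W), Fintype.card W ≤ n →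
      ∃ (B : Type) (F : Digraph B), SinkDelSeq G F ∧
        G.contour.fracIndepNum ≤ F.contour.fracIndepNum ∧ F.cond.IsCanonicalDAG by
    exact h (Fintype.card V) V H le_rfl
  intro n
  induction n with
  | zero =>
    intro W _ G hcard
    haveI : IsEmpty W := Fintype.card_eq_zero_iff.mp (Nat.le_zero.mp hcard)
    exact ⟨W, G, .refl G, le_rfl, Stmt17Aux.canonical_of_all G fun v => isEmptyElim v⟩
  | succ n ih =>
    intro W _ G hcard
    by_cases hall : ∀ v, G.InSourceComp v ∨ G.IsSinkVert v
    · exact ⟨W, G, .refl G, le_rfl, Stmt17Aux.canonical_of_all G hall⟩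
    · push_neg at hall
      obtain ⟨m, hm, hms⟩ := hall
      simp only [Digraph.IsSinkVert, not_forall] at hms
      obtain ⟨t', hmt', ht'm⟩ := hms
      obtain ⟨t, ht't, htsink⟩ := Stmt17Aux.exists_sink_above G t'
      have hmt : G.Reaches m t := hmt'.trans ht't
      have htm : ¬ G.Reaches t m := fun h => ht'm (ht't.trans h)
      haveI : Fintype {v : W // ¬ (G.Reaches v t ∧ G.Reaches t v)} :=
        Fintype.ofFinite _
      have hnotmem : t ∉ Set.range
          (Subtype.val : {v : W // ¬ (G.Reaches v t ∧ G.Reaches t v)} → W) := by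
        rintro ⟨a, ha⟩
        apply a.2
        rw [ha]
        exact ⟨Relation.ReflTransGen.refl, Relation.ReflTransGen.refl⟩
      have hlt := Fintype.card_lt_of_injective_of_notMem _
        Subtype.val_injective hnotmem
      obtain ⟨B, F, hseq, hle, hcan⟩ := ih _ (G.sinkDelete t) (by omega)
      exact ⟨B, F, .step t htsink hseq,
        le_trans (Stmt17Aux.contour_le_sinkDelete G t m htsink hmt htm hm) hle, hcan⟩

end
end
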